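/- arXiv:2512.04612 — 3 statements merged into one kernel-verified Lean document; each statement's English description precedes it below -/
import Mathlib

section
/- For every integer l ≥ 1 and every sequence of constants c_2, c_3, …, c_l there is a constant K, depending only on l and c_2,…,c_l, with the following property: whenever m ≥ 1 and X_1,…,X_m are independent real random variables with E[X_k] = 0 and E[|X_k|^j] ≤ c_j for all 2 ≤ j ≤ l and 1 ≤ k ≤ m, one has |E[(X_1 + ⋯ + X_m)^l]| ≤ K · m^⌊l/2⌋. -/
open MeasureTheory ProbabilityTheory Finset ENNReal


lemma indep_prod_integral {Ω : Type} [MeasurableSpace Ω] {μ : Measure Ω}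
    [IsProbabilityMeasure μ] {ι : Type} {g : ι → Ω → ℝ}
    (hmeas : ∀ i, Measurable (g i))
    (hindep : iIndepFun g μ)
    (s : Finset ι) (hint : ∀ i ∈ s, Integrable (g i) μ) :
    Integrable (fun ω => ∏ i ∈ s, g i ω) μ ∧
      ∫ ω, ∏ i ∈ s, g i ω ∂μ = ∏ i ∈ s, ∫ ω, g i ω ∂μ := by
  classical
  induction s using Finset.cons_induction with
  | empty => simp
  | cons a s ha ih =>
    obtain ⟨ih1, ih2⟩ := ih (fun i hi => hint i (Finset.mem_cons_of_mem hi))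
    have hia : Integrable (g a) μ := hint a (Finset.mem_cons_self a s)
    have hInd : IndepFun (∏ j ∈ s, g j) (g a) μ :=
      iIndepFun.indepFun_finset_prod_of_notMem hindep hmeas ha
    have hfun : (fun ω => ∏ i ∈ s, g i ω) = ∏ j ∈ s, g j := by
      funext ω; simp [Finset.prod_apply]
    rw [hfun] at ih1 ih2
    have key : (fun ω => ∏ i ∈ Finset.cons a s ha, g i ω)
        = (∏ j ∈ s, g j) * g a := by
      funext ω
      simp only [Finset.prod_cons, Finset.prod_apply, Pi.mul_apply, Finset.prod_insert ha]
      ring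
    constructor
    · rw [key]; exact hInd.integrable_mul ih1 hia
    · rw [key, Finset.prod_cons, hInd.integral_mul_eq_mul_integral ih1.aestronglyMeasurable hia.aestronglyMeasurable, ih2]
      ring

lemma indep_sum_moment {Ω : Type} [MeasurableSpace Ω] {μ : Measure Ω}
    [IsProbabilityMeasure μ] {f g : Ω → ℝ} (hf : Measurable f) (hg : Measurable g)
    (hfg : IndepFun f g μ) (l : ℕ)
    (h : ∫⁻ ω, (‖f ω + g ω‖₊ : ℝ≥0∞) ^ l ∂μ < ⊤) :
    ∫⁻ ω, (‖f ω‖₊ : ℝ≥0∞) ^ l ∂μ < ⊤ := by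
  have hmap : μ.map (fun ω => (f ω, g ω)) = (μ.map f).prod (μ.map g) :=
    (indepFun_iff_map_prod_eq_prod_map_map hf.aemeasurable hg.aemeasurable).mp hfg
  have hmf : IsProbabilityMeasure (μ.map f) := Measure.isProbabilityMeasure_map hf.aemeasurable
  have hmg : IsProbabilityMeasure (μ.map g) := Measure.isProbabilityMeasure_map hg.aemeasurable
  have hF : Measurable (fun p : ℝ × ℝ => (‖p.1 + p.2‖₊ : ℝ≥0∞) ^ l) :=
    ((measurable_fst.add measurable_snd).nnnorm.coe_nnreal_ennreal).pow_const l
  have h1 : ∫⁻ p : ℝ × ℝ, (‖p.1 + p.2‖₊ : ℝ≥0∞) ^ l ∂((μ.map f).prod (μ.map g)) < ⊤ := by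
    rw [← hmap, lintegral_map hF (hf.prodMk hg)]
    exact h
  rw [lintegral_prod_symm _ hF.aemeasurable] at h1
  have hFy : Measurable (fun y => ∫⁻ x, (‖x + y‖₊ : ℝ≥0∞) ^ l ∂(μ.map f)) := by
    exact Measurable.lintegral_prod_left hF
  have hae : ∀ᵐ y ∂(μ.map g), (∫⁻ x, (‖x + y‖₊ : ℝ≥0∞) ^ l ∂(μ.map f)) < ⊤ :=
    ae_lt_top hFy h1.ne
  obtain ⟨y, hy⟩ := hae.exists
  have hbound : ∀ x : ℝ, (‖x‖₊ : ℝ≥0∞) ^ l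
      ≤ 2 ^ l * ((‖x + y‖₊ : ℝ≥0∞) ^ l + (‖y‖₊ : ℝ≥0∞) ^ l) := by
    intro x
    have h1 : (‖x‖₊ : ℝ≥0∞) ≤ (‖x + y‖₊ : ℝ≥0∞) + (‖y‖₊ : ℝ≥0∞) := by
      have : ‖x‖₊ ≤ ‖x + y‖₊ + ‖y‖₊ := by
        simpa using nnnorm_add_le (x + y) (-y)
      exact_mod_cast this
    calc (‖x‖₊ : ℝ≥0∞) ^ l ≤ ((‖x + y‖₊ : ℝ≥0∞) + (‖y‖₊ : ℝ≥0∞)) ^ l :=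
          pow_le_pow_left₀ zero_le h1 l
      _ ≤ (2 * ((‖x + y‖₊ : ℝ≥0∞) ⊔ (‖y‖₊ : ℝ≥0∞))) ^ l := by
          apply pow_le_pow_left₀ zero_le
          rw [two_mul]
          exact add_le_add le_sup_left le_sup_right
      _ = 2 ^ l * ((‖x + y‖₊ : ℝ≥0∞) ⊔ (‖y‖₊ : ℝ≥0∞)) ^ l := mul_pow _ _ _
      _ ≤ 2 ^ l * ((‖x + y‖₊ : ℝ≥0∞) ^ l + (‖y‖₊ : ℝ≥0∞) ^ l) := by
          gcongr
          rcases le_total (‖x + y‖₊ : ℝ≥0∞) (‖y‖₊ : ℝ≥0∞) with hc | hc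
          · rw [sup_eq_right.mpr hc]; exact le_add_self
          · rw [sup_eq_left.mpr hc]; exact le_self_add
  have h2 : ∫⁻ x, (‖x‖₊ : ℝ≥0∞) ^ l ∂(μ.map f) < ⊤ := by
    calc ∫⁻ x, (‖x‖₊ : ℝ≥0∞) ^ l ∂(μ.map f)
        ≤ ∫⁻ x, 2 ^ l * ((‖x + y‖₊ : ℝ≥0∞) ^ l + (‖y‖₊ : ℝ≥0∞) ^ l) ∂(μ.map f) :=
          lintegral_mono fun x => hbound x
      _ = 2 ^ l * ((∫⁻ x, (‖x + y‖₊ : ℝ≥0∞) ^ l ∂(μ.map f)) + (‖y‖₊ : ℝ≥0∞) ^ l) := by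
          rw [lintegral_const_mul _ (by
            exact ((measurable_id.add_const y).nnnorm.coe_nnreal_ennreal.pow_const l).add
              measurable_const),
            lintegral_add_right _ measurable_const, lintegral_const]
          simp
      _ < ⊤ := by
          apply ENNReal.mul_lt_top
          · exact pow_lt_top ENNReal.ofNat_lt_top
          · exact ENNReal.add_lt_top.mpr ⟨hy, pow_lt_top coe_lt_top⟩
  rw [lintegral_map (measurable_nnnorm.coe_nnreal_ennreal.pow_const l) hf] at h2
  exact h2

lemma card_small_image {l m r : ℕ} (hl : 1 ≤ l) (hm : 1 ≤ m) :
    (Finset.univ.filter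
      (fun p : Fin l → Fin m => ((Finset.univ : Finset (Fin l)).image p).card ≤ r)).card
      ≤ r ^ l * m ^ r := by
  classical
  rcases Nat.eq_zero_or_pos r with hr | hr
  · subst hr
    convert Nat.zero_le _
    rw [Finset.card_eq_zero, Finset.filter_eq_empty_iff]
    intro p _
    simp only [not_le, Nat.lt_iff_add_one_le, Nat.zero_add]
    rw [Nat.succ_le_iff, Finset.card_pos]
    exact ⟨p ⟨0, hl⟩, Finset.mem_image_of_mem p (mem_univ _)⟩
  · set B := Finset.univ.filter
      (fun p : Fin l → Fin m => ((Finset.univ : Finset (Fin l)).image p).card ≤ r) with hB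
    set Φ : (Fin l → Fin m) → (Fin l → Fin r) × (Fin r → Fin m) := fun p =>
      (fun i : Fin l => (⟨((((Finset.univ : Finset (Fin l)).image p).orderIsoOfFin rfl).symm
              ⟨p i, Finset.mem_image_of_mem p (mem_univ i)⟩ : ℕ) % r, Nat.mod_lt _ hr⟩ : Fin r),
       fun j : Fin r => if hj : (j : ℕ) < ((Finset.univ : Finset (Fin l)).image p).card then
              (((((Finset.univ : Finset (Fin l)).image p).orderIsoOfFin rfl) ⟨j, hj⟩ : _) : Fin m)
            else (⟨0, hm⟩ : Fin m)) with hΦ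
    have key : B.card ≤ (Finset.univ : Finset ((Fin l → Fin r) × (Fin r → Fin m))).card := by
      apply Finset.card_le_card_of_injOn Φ (fun p _ => mem_univ _)
      intro p hp q hq hpq
      simp only [hB, Finset.coe_filter, Set.mem_setOf_eq] at hp hq
      have recover : ∀ p : Fin l → Fin m,
          ((Finset.univ : Finset (Fin l)).image p).card ≤ r → ∀ i : Fin l,
          (Φ p).2 ((Φ p).1 i) = p i := by
        intro p hcard i
        set s := (Finset.univ : Finset (Fin l)).image p with hs
        set e := s.orderIsoOfFin rfl with he
        set x : {a // a ∈ s} := ⟨p i, Finset.mem_image_of_mem p (mem_univ i)⟩ with hx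
        have hlt : ((e.symm x : Fin s.card) : ℕ) < s.card := (e.symm x).isLt
        have hmod : ((e.symm x : Fin s.card) : ℕ) % r = ((e.symm x : Fin s.card) : ℕ) :=
          Nat.mod_eq_of_lt (lt_of_lt_of_le hlt hcard)
        simp only [hΦ]
        show (if h : ((e.symm x : Fin s.card) : ℕ) % r < s.card then
            ((e ⟨((e.symm x : Fin s.card) : ℕ) % r, h⟩ : s) : Fin m) else ⟨0, hm⟩) = p i
        rw [hmod]
        rw [dif_pos hlt]
        have h5 : (⟨((e.symm x : Fin s.card) : ℕ), hlt⟩ : Fin s.card) = e.symm x := rfl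
        rw [h5]
        simp [hx]
      funext i
      have h1 := recover p hp.2 i
      have h2 := recover q hq.2 i
      rw [← h1, ← h2, hpq]
    simpa [Fintype.card_prod, Fintype.card_fun] using key


open MeasureTheory ProbabilityTheory

/-- For every integer `l ≥ 1` and constants `c 2, …, c l` there is a constant
`K` (depending only on `l` and the `c j`) such that for all `m ≥ 1` and all independent real
random variables `X 0, …, X (m-1)` with mean zero and `E |X k| ^ j ≤ c j` for `2 ≤ j ≤ l`,
one has `|E[(X 0 + ⋯ + X (m-1)) ^ l]| ≤ K * m ^ ⌊l / 2⌋`. -/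
theorem statement0 (l : ℕ) (hl : 1 ≤ l) (c : ℕ → ℝ) :
    ∃ K : ℝ, ∀ (Ω : Type) (_ : MeasurableSpace Ω) (μ : Measure Ω),
      IsProbabilityMeasure μ →
      ∀ m : ℕ, 1 ≤ m →
      ∀ X : Fin m → Ω → ℝ,
        (∀ k, Measurable (X k)) →
        iIndepFun X μ →
        (∀ k, ∫ ω, X k ω ∂μ = 0) →
        (∀ k, ∀ j : ℕ, 2 ≤ j → j ≤ l → ∫ ω, |X k ω| ^ j ∂μ ≤ c j) →
        |∫ ω, (∑ k, X k ω) ^ l ∂μ| ≤ K * (m : ℝ) ^ (l / 2) := by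
  classical
  set r := l / 2 with hr
  set C : ℝ := 1 + ∑ j ∈ Finset.Icc 2 l, |c j| with hCdef
  have hC1 : 1 ≤ C := by
    have : (0:ℝ) ≤ ∑ j ∈ Finset.Icc 2 l, |c j| :=
      Finset.sum_nonneg fun j _ => abs_nonneg _
    simp only [hCdef]; linarith
  have hC0 : (0:ℝ) ≤ C := by linarith
  have hCj : ∀ j : ℕ, 2 ≤ j → j ≤ l → c j ≤ C := by
    intro j h2 hjl
    have h1 : |c j| ≤ ∑ i ∈ Finset.Icc 2 l, |c i| :=
      Finset.single_le_sum (fun i _ => abs_nonneg (c i))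
        (Finset.mem_Icc.mpr ⟨h2, hjl⟩)
    have := le_abs_self (c j)
    simp only [hCdef]; linarith
  refine ⟨(l : ℝ) ^ l * C ^ l, ?_⟩
  intro Ω _ μ hμ m hm X hXm hXi hXmean hXmom
  have hK0 : (0:ℝ) ≤ (l : ℝ) ^ l * C ^ l := by positivity
  by_cases hI : Integrable (fun ω => (∑ k, X k ω) ^ l) μ
  swap
  · rw [integral_undef hI]
    simpa using mul_nonneg hK0 (pow_nonneg (Nat.cast_nonneg m) r)
  -- finiteness of l-th moments of each X k
  have hL : ∀ k, ∫⁻ ω, (‖X k ω‖₊ : ℝ≥0∞) ^ l ∂μ < ⊤ := by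
    intro k
    have hg : Measurable (fun ω => ∑ j ∈ Finset.univ.erase k, X j ω) :=
      Finset.measurable_sum _ (fun j _ => hXm j)
    have hsum : (∑ j ∈ Finset.univ.erase k, X j) = fun ω => ∑ j ∈ Finset.univ.erase k, X j ω := by
      funext ω; simp [Finset.sum_apply]
    have hind : IndepFun (X k) (fun ω => ∑ j ∈ Finset.univ.erase k, X j ω) μ := by
      have h := (iIndepFun.indepFun_finset_sum_of_notMem hXi hXm
        (Finset.notMem_erase k Finset.univ)).symm
      rwa [hsum] at h
    apply indep_sum_moment (hXm k) hg hind l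
    have h2 : ∀ ω, X k ω + ∑ j ∈ Finset.univ.erase k, X j ω = ∑ j, X j ω := fun ω =>
      Finset.add_sum_erase Finset.univ (fun j => X j ω) (Finset.mem_univ k)
    have h3 := hI.2
    rw [HasFiniteIntegral] at h3
    calc ∫⁻ ω, (‖X k ω + ∑ j ∈ Finset.univ.erase k, X j ω‖₊ : ℝ≥0∞) ^ l ∂μ
        = ∫⁻ ω, (‖(∑ j, X j ω) ^ l‖₊ : ℝ≥0∞) ∂μ := by
          apply lintegral_congr
          intro ω
          rw [h2 ω, nnnorm_pow, ENNReal.coe_pow]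
      _ < ⊤ := h3
  -- integrability of powers
  have hint : ∀ (k : Fin m) (a : ℕ), a ≤ l → Integrable (fun ω => X k ω ^ a) μ := by
    intro k a ha
    refine ⟨((hXm k).pow_const a).aestronglyMeasurable, ?_⟩
    rw [HasFiniteIntegral]
    calc ∫⁻ ω, (‖X k ω ^ a‖₊ : ℝ≥0∞) ∂μ
        ≤ ∫⁻ ω, (1 + (‖X k ω‖₊ : ℝ≥0∞) ^ l) ∂μ := by
          apply lintegral_mono
          intro ω
          simp only [nnnorm_pow, ENNReal.coe_pow]
          rcases le_total ((‖X k ω‖₊ : ℝ≥0∞)) 1 with hb | hb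
          · exact (pow_le_one₀ zero_le hb).trans le_self_add
          · exact (pow_le_pow_right₀ hb ha).trans le_add_self
      _ = 1 + ∫⁻ ω, (‖X k ω‖₊ : ℝ≥0∞) ^ l ∂μ := by
          rw [lintegral_add_left measurable_const]
          simp
      _ < ⊤ := ENNReal.add_lt_top.mpr ⟨one_lt_top, hL k⟩
  -- notation for multiplicities
  set a : (Fin l → Fin m) → Fin m → ℕ :=
    fun p k => (Finset.univ.filter fun i => p i = k).card with ha
  have hal : ∀ p k, a p k ≤ l := by
    intro p k
    calc a p k ≤ (Finset.univ : Finset (Fin l)).card := Finset.card_filter_le _ _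
      _ = l := by simp
  -- the factorization of each term
  have hfact : ∀ p : Fin l → Fin m,
      (fun ω => ∏ i, X (p i) ω) = fun ω => ∏ k ∈ Finset.univ.image p, X k ω ^ a p k := by
    intro p
    funext ω
    rw [← Finset.prod_fiberwise_of_maps_to
      (fun i _ => Finset.mem_image_of_mem p (Finset.mem_univ i)) (fun i => X (p i) ω)]
    apply Finset.prod_congr rfl
    intro k _
    rw [show (∏ i ∈ Finset.univ.filter (fun i => p i = k), X (p i) ω) = X k ω ^ a p k from ?_]
    rw [ha]
    rw [← Finset.prod_const]
    apply Finset.prod_congr rfl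
    intro i hi
    rw [(Finset.mem_filter.mp hi).2]
  -- integral of each term
  have hterm : ∀ p : Fin l → Fin m,
      Integrable (fun ω => ∏ i, X (p i) ω) μ ∧
      ∫ ω, ∏ i, X (p i) ω ∂μ = ∏ k ∈ Finset.univ.image p, ∫ ω, X k ω ^ a p k ∂μ := by
    intro p
    have hindep' : iIndepFun (fun k => fun ω => X k ω ^ a p k) μ :=
      hXi.comp (fun k x => x ^ a p k) (fun k => measurable_id.pow_const _)
    obtain ⟨h1, h2⟩ := indep_prod_integral (fun k => (hXm k).pow_const (a p k)) hindep'
      (Finset.univ.image p) (fun k _ => hint k (a p k) (hal p k))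
    rw [hfact p]
    exact ⟨h1, h2⟩
  -- expansion of the power of the sum
  have hsplit : ∫ ω, (∑ k, X k ω) ^ l ∂μ
      = ∑ p : Fin l → Fin m, ∫ ω, ∏ i, X (p i) ω ∂μ := by
    rw [show (fun ω => (∑ k, X k ω) ^ l)
        = fun ω => ∑ p : Fin l → Fin m, ∏ i, X (p i) ω from
      funext fun ω => Fintype.sum_pow (fun k => X k ω) l]
    exact integral_finset_sum _ (fun p _ => (hterm p).1)
  -- bound each term
  have hbound : ∀ p : Fin l → Fin m,
      |∫ ω, ∏ i, X (p i) ω ∂μ|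
        ≤ if (Finset.univ.image p).card ≤ r then C ^ l else 0 := by
    intro p
    by_cases hone : ∃ k ∈ Finset.univ.image p, a p k = 1
    · obtain ⟨k, hk, hk1⟩ := hone
      have : ∫ ω, ∏ i, X (p i) ω ∂μ = 0 := by
        rw [(hterm p).2]
        apply Finset.prod_eq_zero hk
        rw [hk1]
        simpa using hXmean k
      rw [this, abs_zero]
      split
      · positivity
      · exact le_refl 0
    · push_neg at hone
      have h2a : ∀ k ∈ Finset.univ.image p, 2 ≤ a p k := by
        intro k hk
        have h1a : 1 ≤ a p k := by
          rw [ha, Nat.succ_le_iff, Finset.card_pos]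
          obtain ⟨i, _, hi⟩ := Finset.mem_image.mp hk
          exact ⟨i, Finset.mem_filter.mpr ⟨Finset.mem_univ i, hi⟩⟩
        have := hone k hk
        omega
      have hcard : (Finset.univ.image p).card ≤ r := by
        have hsum : l = ∑ k ∈ Finset.univ.image p, a p k := by
          have := Finset.card_eq_sum_card_fiberwise
            (fun i (_ : i ∈ (Finset.univ : Finset (Fin l)))
              => Finset.mem_image_of_mem p (Finset.mem_univ i))
          simpa [ha] using this
        have h2 : (Finset.univ.image p).card * 2 ≤ l := by
          have h4 : (Finset.univ.image p).card * 2 ≤ ∑ k ∈ Finset.univ.image p, a p k := by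
            simpa [smul_eq_mul] using Finset.card_nsmul_le_sum _ (a p) 2 h2a
          omega
        rw [hr]
        exact Nat.le_div_iff_mul_le (by norm_num) |>.mpr h2
      rw [if_pos hcard]
      rw [(hterm p).2, Finset.abs_prod]
      have hJC : ∀ k ∈ Finset.univ.image p, |∫ ω, X k ω ^ a p k ∂μ| ≤ C := by
        intro k hk
        have habs : |∫ ω, X k ω ^ a p k ∂μ| ≤ ∫ ω, |X k ω ^ a p k| ∂μ := by
          have := norm_integral_le_integral_norm (μ := μ) (fun ω => X k ω ^ a p k)
          simpa [Real.norm_eq_abs] using this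
        have heq : ∫ ω, |X k ω ^ a p k| ∂μ = ∫ ω, |X k ω| ^ a p k ∂μ := by
          apply integral_congr_ae
          filter_upwards with ω
          rw [abs_pow]
        calc |∫ ω, X k ω ^ a p k ∂μ| ≤ ∫ ω, |X k ω| ^ a p k ∂μ := by rw [← heq]; exact habs
          _ ≤ c (a p k) := hXmom k (a p k) (h2a k hk) (hal p k)
          _ ≤ C := hCj _ (h2a k hk) (hal p k)
      calc ∏ k ∈ Finset.univ.image p, |∫ ω, X k ω ^ a p k ∂μ|
          ≤ ∏ k ∈ Finset.univ.image p, C :=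
            Finset.prod_le_prod (fun k _ => abs_nonneg _) hJC
        _ = C ^ (Finset.univ.image p).card := Finset.prod_const C
        _ ≤ C ^ l := pow_le_pow_right₀ hC1 (by
            calc (Finset.univ.image p).card ≤ r := hcard
              _ ≤ l := Nat.div_le_self l 2)
  -- assemble
  set B := Finset.univ.filter
    (fun p : Fin l → Fin m => ((Finset.univ : Finset (Fin l)).image p).card ≤ r) with hB
  have hcardB : (B.card : ℝ) ≤ (r : ℝ) ^ l * (m : ℝ) ^ r := by
    have := card_small_image (l := l) (m := m) (r := r) hl hm
    calc (B.card : ℝ) ≤ ((r ^ l * m ^ r : ℕ) : ℝ) := by exact_mod_cast this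
      _ = (r : ℝ) ^ l * (m : ℝ) ^ r := by push_cast; ring
  calc |∫ ω, (∑ k, X k ω) ^ l ∂μ|
      = |∑ p : Fin l → Fin m, ∫ ω, ∏ i, X (p i) ω ∂μ| := by rw [hsplit]
    _ ≤ ∑ p : Fin l → Fin m, |∫ ω, ∏ i, X (p i) ω ∂μ| :=
        Finset.abs_sum_le_sum_abs _ _
    _ ≤ ∑ p : Fin l → Fin m,
        (if (Finset.univ.image p).card ≤ r then C ^ l else 0) :=
        Finset.sum_le_sum (fun p _ => hbound p)
    _ = ∑ p ∈ B, C ^ l := (Finset.sum_filter _ _).symm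
    _ = (B.card : ℝ) * C ^ l := by rw [Finset.sum_const, nsmul_eq_mul]
    _ ≤ ((r : ℝ) ^ l * (m : ℝ) ^ r) * C ^ l :=
        mul_le_mul_of_nonneg_right hcardB (by positivity)
    _ = ((r : ℝ) ^ l * C ^ l) * (m : ℝ) ^ r := by ring
    _ ≤ ((l : ℝ) ^ l * C ^ l) * (m : ℝ) ^ r := by
        apply mul_le_mul_of_nonneg_right _ (by positivity)
        apply mul_le_mul_of_nonneg_right _ (by positivity)
        apply pow_le_pow_left₀ (by positivity)
        exact_mod_cast Nat.div_le_self l 2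
end

section
/- In the symmetric-circulant empirical eigenvalue model, there is a constant K, depending only on the uniform moment bounds of the input variables, such that for every n ≥ 1 and all 0 ≤ t_1 ≤ t_2 ≤ t_3 < ∞: E[ |Y_n(t_3) − Y_n(t_2)|² · |Y_n(t_2) − Y_n(t_1)|² ] ≤ K (t_3 − t_1)². (Tightness estimate from the proof of Theorem 3.4 of the paper.) -/
set_option maxHeartbeats 1000000

open MeasureTheory ProbabilityTheory Filter

/-- The random walk `S_j^{(n)}(t) = ∑_{k=1}^{⌊nt⌋} X_{j,k}` (steps indexed by
`k = 0, 1, 2, …`). -/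
noncomputable def Swalk {Ω : Type} (X : ℕ → ℕ → Ω → ℝ) (n : ℕ) (j : ℕ) (t : ℝ) (ω : Ω) : ℝ :=
  ∑ k ∈ Finset.range ⌊(n : ℝ) * t⌋₊, X j k ω

/-- The randomly chosen eigenvalue
`Y_n(t) = n⁻¹ [S_0^{(n)}(t) + 2 ∑_{j=1}^{⌊n/2⌋} S_j^{(n)}(t) cos(2π U_n j / n)]` of the scaled
symmetric circulant matrix `n⁻¹ A_n(t)`. -/
noncomputable def Yproc {Ω : Type} (X : ℕ → ℕ → Ω → ℝ) (U : ℕ → Ω → ℕ) (n : ℕ) (t : ℝ)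
    (ω : Ω) : ℝ :=
  (n : ℝ)⁻¹ * (Swalk X n 0 t ω +
    2 * ∑ j ∈ Finset.Icc 1 (n / 2),
      Swalk X n j t ω * Real.cos (2 * Real.pi * (U n ω : ℝ) * (j : ℝ) / (n : ℝ)))

/-- tightness estimate from the proof of Theorem 3.4 of the paper. In the
symmetric-circulant empirical eigenvalue model there is a constant `K` (depending only on the
uniform moment bounds) such that for all `n ≥ 1` and `0 ≤ t₁ ≤ t₂ ≤ t₃`,
`E[ |Y_n(t₃) − Y_n(t₂)|² |Y_n(t₂) − Y_n(t₁)|² ] ≤ K (t₃ − t₁)²`. -/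
theorem statement11 {Ω : Type} [MeasurableSpace Ω] (μ : Measure Ω) [IsProbabilityMeasure μ]
    (X : ℕ → ℕ → Ω → ℝ) (U : ℕ → Ω → ℕ)
    (hmeas : ∀ j k, Measurable (X j k))
    (hindep : iIndepFun (fun v : ℕ × ℕ => X v.1 v.2) μ)
    (hmean : ∀ j k, ∫ ω, X j k ω ∂μ = 0)
    (hvar : ∀ j k, ∫ ω, (X j k ω) ^ 2 ∂μ = 1)
    (hmom : ∀ l : ℕ, 1 ≤ l → ∃ C : ℝ, ∀ j k, ∫ ω, |X j k ω| ^ l ∂μ ≤ C)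
    (hUmeas : ∀ n, Measurable (U n))
    (hUrange : ∀ n, 1 ≤ n → ∀ ω, U n ω ∈ Finset.Icc 1 n)
    (hUunif : ∀ n, 1 ≤ n → ∀ r ∈ Finset.Icc 1 n, μ {ω | U n ω = r} = (n : ENNReal)⁻¹)
    (hUindep : ∀ n, Indep (MeasurableSpace.comap (U n) inferInstance)
      (⨆ v : ℕ × ℕ, MeasurableSpace.comap (X v.1 v.2) inferInstance) μ) :
    ∃ K : ℝ, ∀ n : ℕ, 1 ≤ n → ∀ t₁ t₂ t₃ : ℝ, 0 ≤ t₁ → t₁ ≤ t₂ → t₂ ≤ t₃ →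
      ∫ ω, |Yproc X U n t₃ ω - Yproc X U n t₂ ω| ^ 2
          * |Yproc X U n t₂ ω - Yproc X U n t₁ ω| ^ 2 ∂μ
        ≤ K * (t₃ - t₁) ^ 2 := by
  classical
  refine ⟨64, ?_⟩
  intro n hn t₁ t₂ t₃ ht₁ h12 h23
  have hn0 : (0:ℝ) < n := by exact_mod_cast hn
  have hnne : (n:ℝ) ≠ 0 := ne_of_gt hn0
  -- basic integrability
  have hX2int : ∀ p : ℕ × ℕ, Integrable (fun ω => X p.1 p.2 ω ^ 2) μ := by
    intro p
    by_contra h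
    have h2 := hvar p.1 p.2
    rw [integral_undef h] at h2
    norm_num at h2
  have hXint : ∀ p : ℕ × ℕ, Integrable (fun ω => X p.1 p.2 ω) μ := by
    intro p
    refine Integrable.mono' ((integrable_const (1:ℝ)).add (hX2int p))
      (hmeas p.1 p.2).aestronglyMeasurable (ae_of_all _ fun ω => ?_)
    simp only [Pi.add_apply, Real.norm_eq_abs]
    nlinarith [sq_nonneg (|X p.1 p.2 ω| - 1), sq_abs (X p.1 p.2 ω), abs_nonneg (X p.1 p.2 ω)]
  have hmulint : ∀ p q : ℕ × ℕ, Integrable (fun ω => X p.1 p.2 ω * X q.1 q.2 ω) μ := by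
    intro p q
    rcases eq_or_ne p q with rfl | hpq
    · simpa [pow_two] using hX2int p
    · exact (hindep.indepFun hpq).integrable_mul (hXint p) (hXint q)
  have hmulval : ∀ p q : ℕ × ℕ,
      ∫ ω, X p.1 p.2 ω * X q.1 q.2 ω ∂μ = if p = q then 1 else 0 := by
    intro p q
    rcases eq_or_ne p q with rfl | hpq
    · rw [if_pos rfl]; simpa [pow_two] using hvar p.1 p.2
    · rw [if_neg hpq]
      have h := (hindep.indepFun hpq).integral_fun_mul_eq_mul_integral (hXint p).1 (hXint q).1
      rw [hmean p.1 p.2] at h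
      simpa using h
  -- notation
  set a := ⌊(n:ℝ) * t₁⌋₊ with ha
  set b := ⌊(n:ℝ) * t₂⌋₊ with hb
  set c := ⌊(n:ℝ) * t₃⌋₊ with hc
  have hab : a ≤ b := Nat.floor_mono (mul_le_mul_of_nonneg_left h12 (le_of_lt hn0))
  have hbc : b ≤ c := Nat.floor_mono (mul_le_mul_of_nonneg_left h23 (le_of_lt hn0))
  set J : Finset ℕ := Finset.range (n / 2 + 1) with hJ
  set wf : ℕ → ℕ → ℝ := fun j r =>
    if j = 0 then 1 else 2 * Real.cos (2 * Real.pi * (r:ℝ) * (j:ℝ) / (n:ℝ)) with hwf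
  set w : ℕ → Ω → ℝ := fun j ω => wf j (U n ω) with hw
  have hwbd : ∀ j ω, |w j ω| ≤ 2 := by
    intro j ω
    rcases eq_or_ne j 0 with h | h
    · norm_num [hw, hwf, h]
    · simp only [hw, hwf, if_neg h]
      rw [abs_mul, abs_two]
      have h1 := Real.abs_cos_le_one (2 * Real.pi * (U n ω : ℝ) * (j:ℝ) / (n:ℝ))
      nlinarith [abs_nonneg (Real.cos (2 * Real.pi * (U n ω : ℝ) * (j:ℝ) / (n:ℝ)))]
  have hwmeas : ∀ j, Measurable (w j) := by
    intro j
    exact (measurable_from_top (f := wf j)).comp (hUmeas n)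
  -- Y as a single weighted sum
  have hY : ∀ t ω, Yproc X U n t ω = (n:ℝ)⁻¹ * ∑ j ∈ J, w j ω * Swalk X n j t ω := by
    intro t ω
    have hIcc : ∀ f : ℕ → ℝ,
        ∑ j ∈ Finset.Icc 1 (n/2), f j = ∑ i ∈ Finset.range (n/2), f (i+1) := by
      intro f
      rw [← Finset.Ico_add_one_right_eq_Icc, Finset.sum_Ico_eq_sum_range]
      simp only [Nat.add_sub_cancel]
      exact Finset.sum_congr rfl fun i _ => by rw [Nat.add_comm]
    rw [hJ, Finset.sum_range_succ']
    simp only [hw, hwf, Nat.succ_ne_zero, if_false, if_pos rfl]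
    rw [show Yproc X U n t ω = (n:ℝ)⁻¹ * (Swalk X n 0 t ω +
        2 * ∑ j ∈ Finset.Icc 1 (n / 2),
          Swalk X n j t ω * Real.cos (2 * Real.pi * (U n ω : ℝ) * (j : ℝ) / (n : ℝ))) from rfl]
    rw [hIcc (fun j => Swalk X n j t ω * Real.cos (2 * Real.pi * (U n ω : ℝ) * (j:ℝ) / (n:ℝ)))]
    rw [Finset.mul_sum]
    rw [Finset.sum_congr rfl (fun i _ => show
      (2:ℝ) * (Swalk X n (i+1) t ω * Real.cos (2 * Real.pi * (U n ω : ℝ) * ((i+1:ℕ):ℝ) / (n:ℝ)))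
      = 2 * Real.cos (2 * Real.pi * (U n ω : ℝ) * ((i+1:ℕ):ℝ) / (n:ℝ)) * Swalk X n (i+1) t ω
      from by ring)]
    ring
  have hYdiff : ∀ s t : ℝ, s ≤ t → ∀ ω, Yproc X U n t ω - Yproc X U n s ω
      = (n:ℝ)⁻¹ * ∑ j ∈ J, w j ω * ∑ k ∈ Finset.Ico ⌊(n:ℝ)*s⌋₊ ⌊(n:ℝ)*t⌋₊, X j k ω := by
    intro s t hst ω
    have hf : ⌊(n:ℝ)*s⌋₊ ≤ ⌊(n:ℝ)*t⌋₊ :=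
      Nat.floor_mono (mul_le_mul_of_nonneg_left hst (le_of_lt hn0))
    rw [hY t ω, hY s ω, ← mul_sub, ← Finset.sum_sub_distrib]
    congr 1
    refine Finset.sum_congr rfl fun j _ => ?_
    rw [← mul_sub]
    congr 1
    show (∑ k ∈ Finset.range ⌊(n:ℝ)*t⌋₊, X j k ω) - ∑ k ∈ Finset.range ⌊(n:ℝ)*s⌋₊, X j k ω
      = ∑ k ∈ Finset.Ico ⌊(n:ℝ)*s⌋₊ ⌊(n:ℝ)*t⌋₊, X j k ω
    rw [Finset.sum_Ico_eq_sub _ hf]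
  set T2 : Finset (ℕ × ℕ) := J ×ˢ Finset.Ico b c with hT2
  set T1 : Finset (ℕ × ℕ) := J ×ˢ Finset.Ico a b with hT1
  set g : ℕ × ℕ → Ω → ℝ := fun v ω => w v.1 ω * X v.1 v.2 ω with hg
  have hdisj : ∀ v u : ℕ × ℕ, v ∈ T2 → u ∈ T1 → v ≠ u := by
    intro v u hv hu h
    have hv2 := (Finset.mem_product.1 hv).2
    have hu2 := (Finset.mem_product.1 hu).2
    rw [Finset.mem_Ico] at hv2 hu2
    rw [h] at hv2
    omega
  have hsum2 : ∀ ω, Yproc X U n t₃ ω - Yproc X U n t₂ ω = (n:ℝ)⁻¹ * ∑ v ∈ T2, g v ω := by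
    intro ω
    rw [hYdiff t₂ t₃ h23 ω, ← hb, ← hc]
    congr 1
    rw [hT2, Finset.sum_product]
    exact Finset.sum_congr rfl fun j _ => Finset.mul_sum _ _ _
  have hsum1 : ∀ ω, Yproc X U n t₂ ω - Yproc X U n t₁ ω = (n:ℝ)⁻¹ * ∑ v ∈ T1, g v ω := by
    intro ω
    rw [hYdiff t₁ t₂ h12 ω, ← ha, ← hb]
    congr 1
    rw [hT1, Finset.sum_product]
    exact Finset.sum_congr rfl fun j _ => Finset.mul_sum _ _ _
  -- per-term integrability and bound
  have hterm : ∀ v v' u u' : ℕ × ℕ, v ≠ u → v ≠ u' → v' ≠ u → v' ≠ u' →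
      Integrable (fun ω => g v ω * g v' ω * (g u ω * g u' ω)) μ ∧
      ∫ ω, g v ω * g v' ω * (g u ω * g u' ω) ∂μ
        ≤ 16 * ((if v = v' then (1:ℝ) else 0) * (if u = u' then 1 else 0)) := by
    intro v v' u u' hvu hvu' hv'u hv'u'
    set W : Ω → ℝ := fun ω => w v.1 ω * w v'.1 ω * (w u.1 ω * w u'.1 ω) with hW
    set P : Ω → ℝ := fun ω =>
      X v.1 v.2 ω * X v'.1 v'.2 ω * (X u.1 u.2 ω * X u'.1 u'.2 ω) with hP
    have hWmeas : Measurable W :=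
      ((hwmeas v.1).mul (hwmeas v'.1)).mul ((hwmeas u.1).mul (hwmeas u'.1))
    have hWbd : ∀ ω, |W ω| ≤ 16 := by
      intro ω
      have h1 := hwbd v.1 ω; have h2 := hwbd v'.1 ω
      have h3 := hwbd u.1 ω; have h4 := hwbd u'.1 ω
      have n1 := abs_nonneg (w v.1 ω); have n2 := abs_nonneg (w v'.1 ω)
      have n3 := abs_nonneg (w u.1 ω); have n4 := abs_nonneg (w u'.1 ω)
      simp only [hW]
      rw [abs_mul, abs_mul, abs_mul]
      have hab2 : |w v.1 ω| * |w v'.1 ω| ≤ 4 := by nlinarith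
      have hcd2 : |w u.1 ω| * |w u'.1 ω| ≤ 4 := by nlinarith
      calc |w v.1 ω| * |w v'.1 ω| * (|w u.1 ω| * |w u'.1 ω|) ≤ 4 * 4 :=
            mul_le_mul hab2 hcd2 (mul_nonneg n3 n4) (by norm_num)
        _ = 16 := by norm_num
    have hWint : Integrable W μ :=
      (integrable_const (16:ℝ)).mono' hWmeas.aestronglyMeasurable
        (ae_of_all _ fun ω => by simpa [Real.norm_eq_abs] using hWbd ω)
    have hPindep : IndepFun (fun ω => X v.1 v.2 ω * X v'.1 v'.2 ω)
        (fun ω => X u.1 u.2 ω * X u'.1 u'.2 ω) μ :=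
      hindep.indepFun_mul_mul (fun p => hmeas p.1 p.2) v v' u u' hvu hvu' hv'u hv'u'
    have hPint : Integrable P μ := hPindep.integrable_mul (hmulint v v') (hmulint u u')
    have hPval : ∫ ω, P ω ∂μ
        = (if v = v' then (1:ℝ) else 0) * (if u = u' then 1 else 0) := by
      have h := hPindep.integral_fun_mul_eq_mul_integral (hmulint v v').1 (hmulint u u').1
      rw [hmulval v v', hmulval u u'] at h
      exact h
    -- independence of W and P
    have hWP : IndepFun W P μ := by
      have hU : Measurable[MeasurableSpace.comap (U n) inferInstance] (U n) :=
        Measurable.of_comap_le le_rfl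
      have hwj : ∀ j, Measurable[MeasurableSpace.comap (U n) inferInstance] (w j) :=
        fun j => (measurable_from_top (f := wf j)).comp hU
      have hWm : Measurable[MeasurableSpace.comap (U n) inferInstance] W :=
        ((hwj v.1).mul (hwj v'.1)).mul ((hwj u.1).mul (hwj u'.1))
      have hXm : ∀ p : ℕ × ℕ,
          Measurable[⨆ q : ℕ × ℕ, MeasurableSpace.comap (X q.1 q.2) inferInstance]
            (X p.1 p.2) := fun p => Measurable.of_comap_le
        (le_iSup (fun q : ℕ × ℕ => MeasurableSpace.comap (X q.1 q.2) inferInstance) p)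
      have hPm : Measurable[⨆ q : ℕ × ℕ, MeasurableSpace.comap (X q.1 q.2) inferInstance] P :=
        ((hXm v).mul (hXm v')).mul ((hXm u).mul (hXm u'))
      exact indep_of_indep_of_le_right
        (indep_of_indep_of_le_left (hUindep n) hWm.comap_le) hPm.comap_le
    have hfeq : (fun ω => g v ω * g v' ω * (g u ω * g u' ω)) = fun ω => W ω * P ω := by
      funext ω; simp only [hg, hW, hP]; ring
    have hint : Integrable (fun ω => g v ω * g v' ω * (g u ω * g u' ω)) μ := by
      rw [hfeq]
      exact hPint.bdd_mul hWmeas.aestronglyMeasurable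
        (ae_of_all _ fun ω => by simpa [Real.norm_eq_abs] using hWbd ω)
    refine ⟨hint, ?_⟩
    have hval : ∫ ω, g v ω * g v' ω * (g u ω * g u' ω) ∂μ
        = (∫ ω, W ω ∂μ) * ((if v = v' then (1:ℝ) else 0) * (if u = u' then 1 else 0)) := by
      rw [hfeq, ← hPval]
      exact hWP.integral_fun_mul_eq_mul_integral hWint.1 hPint.1
    rw [hval]
    have hWle : ∫ ω, W ω ∂μ ≤ 16 := by
      calc ∫ ω, W ω ∂μ ≤ ∫ _ω, (16:ℝ) ∂μ :=
            integral_mono hWint (integrable_const _) fun ω => le_of_abs_le (hWbd ω)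
        _ = 16 := by simp
    have hdd : (0:ℝ) ≤ (if v = v' then (1:ℝ) else 0) * (if u = u' then 1 else 0) := by
      split_ifs <;> norm_num
    exact mul_le_mul_of_nonneg_right hWle hdd
  -- main expansion
  have hexpand : ∀ ω, (∑ v ∈ T2, g v ω) * (∑ v' ∈ T2, g v' ω)
      * ((∑ u ∈ T1, g u ω) * (∑ u' ∈ T1, g u' ω))
      = ∑ v ∈ T2, ∑ u ∈ T1, ∑ v' ∈ T2, ∑ u' ∈ T1, g v ω * g v' ω * (g u ω * g u' ω) := by
    intro ω
    simp only [Finset.sum_mul_sum]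
  have hint4 : ∀ v ∈ T2, ∀ u ∈ T1, ∀ v' ∈ T2, ∀ u' ∈ T1,
      Integrable (fun ω => g v ω * g v' ω * (g u ω * g u' ω)) μ :=
    fun v hv u hu v' hv' u' hu' =>
      (hterm v v' u u' (hdisj v u hv hu) (hdisj v u' hv hu')
        (hdisj v' u hv' hu) (hdisj v' u' hv' hu')).1
  have key : ∫ ω, |Yproc X U n t₃ ω - Yproc X U n t₂ ω| ^ 2
        * |Yproc X U n t₂ ω - Yproc X U n t₁ ω| ^ 2 ∂μ
      ≤ ((n:ℝ)⁻¹)^4 * (16 * ((T2.card : ℝ) * (T1.card : ℝ))) := by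
    have heq : (fun ω => |Yproc X U n t₃ ω - Yproc X U n t₂ ω| ^ 2
        * |Yproc X U n t₂ ω - Yproc X U n t₁ ω| ^ 2)
        = fun ω => ((n:ℝ)⁻¹)^4 * ∑ v ∈ T2, ∑ u ∈ T1, ∑ v' ∈ T2, ∑ u' ∈ T1, g v ω * g v' ω * (g u ω * g u' ω) := by
      funext ω
      rw [sq_abs, sq_abs, hsum2 ω, hsum1 ω, ← hexpand ω]
      ring
    rw [heq, integral_const_mul]
    have hswap : (∫ ω, (∑ v ∈ T2, ∑ u ∈ T1, ∑ v' ∈ T2, ∑ u' ∈ T1, g v ω * g v' ω * (g u ω * g u' ω)) ∂μ)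
        = ∑ v ∈ T2, ∑ u ∈ T1, ∑ v' ∈ T2, ∑ u' ∈ T1, ∫ ω, g v ω * g v' ω * (g u ω * g u' ω) ∂μ := by
      rw [integral_finset_sum _ (fun v hv => integrable_finset_sum _ (fun u hu =>
        integrable_finset_sum _ (fun v' hv' => integrable_finset_sum _ (fun u' hu' =>
          hint4 v hv u hu v' hv' u' hu'))))]
      refine Finset.sum_congr rfl fun v hv => ?_
      rw [integral_finset_sum _ (fun u hu => integrable_finset_sum _ (fun v' hv' =>
        integrable_finset_sum _ (fun u' hu' => hint4 v hv u hu v' hv' u' hu')))]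
      refine Finset.sum_congr rfl fun u hu => ?_
      rw [integral_finset_sum _ (fun v' hv' => integrable_finset_sum _ (fun u' hu' =>
        hint4 v hv u hu v' hv' u' hu'))]
      refine Finset.sum_congr rfl fun v' hv' => ?_
      rw [integral_finset_sum _ (fun u' hu' => hint4 v hv u hu v' hv' u' hu')]
    rw [hswap]
    have hbound : (∑ v ∈ T2, ∑ u ∈ T1, ∑ v' ∈ T2, ∑ u' ∈ T1, ∫ ω, g v ω * g v' ω * (g u ω * g u' ω) ∂μ)
        ≤ 16 * ((T2.card : ℝ) * (T1.card : ℝ)) := by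
      have step1 : (∑ v ∈ T2, ∑ u ∈ T1, ∑ v' ∈ T2, ∑ u' ∈ T1, ∫ ω, g v ω * g v' ω * (g u ω * g u' ω) ∂μ)
          ≤ ∑ v ∈ T2, ∑ u ∈ T1, ∑ v' ∈ T2, ∑ u' ∈ T1, 16 * ((if v = v' then (1:ℝ) else 0) * (if u = u' then 1 else 0)) := by
        refine Finset.sum_le_sum fun v hv => Finset.sum_le_sum fun u hu =>
          Finset.sum_le_sum fun v' hv' => Finset.sum_le_sum fun u' hu' => ?_
        exact (hterm v v' u u' (hdisj v u hv hu) (hdisj v u' hv hu')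
          (hdisj v' u hv' hu) (hdisj v' u' hv' hu')).2
      refine step1.trans ?_
      have hinner : ∀ v ∈ T2, ∀ u ∈ T1, (∑ v' ∈ T2, ∑ u' ∈ T1, 16 * ((if v = v' then (1:ℝ) else 0) * (if u = u' then 1 else 0))) = 16 := by
        intro v hv u hu
        have h1 : ∀ v' : ℕ × ℕ, (∑ u' ∈ T1, 16 * ((if v = v' then (1:ℝ) else 0) * (if u = u' then 1 else 0)))
            = if v = v' then (16:ℝ) else 0 := by
          intro v'
          rcases eq_or_ne v v' with rfl | h
          · simp [Finset.sum_ite_eq, hu]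
          · simp [h]
        rw [Finset.sum_congr rfl fun v' _ => h1 v']
        simp [Finset.sum_ite_eq, hv]
      rw [Finset.sum_congr rfl (fun v hv => Finset.sum_congr rfl (fun u hu => hinner v hv u hu))]
      simp [Finset.sum_const, nsmul_eq_mul]
      ring_nf
      exact le_refl _
    exact mul_le_mul_of_nonneg_left hbound (by positivity)
  -- final numeric estimate
  have hcard2 : (T2.card : ℝ) ≤ (n:ℝ) * ((c:ℝ) - (b:ℝ)) := by
    rw [hT2, Finset.card_product, hJ, Finset.card_range, Nat.card_Ico]
    push_cast [Nat.cast_sub hbc]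
    have h1 : ((n/2 : ℕ) : ℝ) + 1 ≤ (n:ℝ) := by
      have h0 : (n/2 + 1 : ℕ) ≤ n := by omega
      exact_mod_cast h0
    have h2 : (0:ℝ) ≤ (c:ℝ) - (b:ℝ) := by
      have := (Nat.cast_le (α := ℝ)).2 hbc
      linarith
    nlinarith [mul_le_mul_of_nonneg_right h1 h2, Nat.cast_nonneg (α := ℝ) (n/2)]
  have hcard1 : (T1.card : ℝ) ≤ (n:ℝ) * ((b:ℝ) - (a:ℝ)) := by
    rw [hT1, Finset.card_product, hJ, Finset.card_range, Nat.card_Ico]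
    push_cast [Nat.cast_sub hab]
    have h1 : ((n/2 : ℕ) : ℝ) + 1 ≤ (n:ℝ) := by
      have h0 : (n/2 + 1 : ℕ) ≤ n := by omega
      exact_mod_cast h0
    have h2 : (0:ℝ) ≤ (b:ℝ) - (a:ℝ) := by
      have := (Nat.cast_le (α := ℝ)).2 hab
      linarith
    nlinarith [mul_le_mul_of_nonneg_right h1 h2, Nat.cast_nonneg (α := ℝ) (n/2)]
  have hprod : ((c:ℝ) - (b:ℝ)) * ((b:ℝ) - (a:ℝ)) ≤ 4 * (n:ℝ)^2 * (t₃ - t₁)^2 := by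
    rcases eq_or_lt_of_le hbc with h | hblt
    · rw [← h]
      have : ((b:ℝ) - (b:ℝ)) = 0 := by ring
      rw [show (c:ℝ) = (b:ℝ) from by rw [← h]] at *
      have h4 : (0:ℝ) ≤ 4 * (n:ℝ)^2 * (t₃ - t₁)^2 := by positivity
      simpa using h4
    rcases eq_or_lt_of_le hab with h | halt
    · have h4 : (0:ℝ) ≤ 4 * (n:ℝ)^2 * (t₃ - t₁)^2 := by positivity
      rw [← h]
      simpa using h4
    -- both increments positive
    have hC : (c:ℝ) ≤ (n:ℝ) * t₃ := Nat.floor_le (mul_nonneg hn0.le (by linarith))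
    have hA : (n:ℝ) * t₁ < (a:ℝ) + 1 := Nat.lt_floor_add_one _
    have hx : (1:ℝ) ≤ (c:ℝ) - (b:ℝ) := by
      have : b + 1 ≤ c := hblt
      have := (Nat.cast_le (α := ℝ)).2 this
      push_cast at this; linarith
    have hy : (1:ℝ) ≤ (b:ℝ) - (a:ℝ) := by
      have : a + 1 ≤ b := halt
      have := (Nat.cast_le (α := ℝ)).2 this
      push_cast at this; linarith
    have hsum : (c:ℝ) - (a:ℝ) ≤ (n:ℝ) * (t₃ - t₁) + 1 := by nlinarith
    nlinarith [sq_nonneg ((c:ℝ) - (b:ℝ) - ((b:ℝ) - (a:ℝ))), sq_nonneg ((c:ℝ) - (a:ℝ) - 2),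
      mul_nonneg (sub_nonneg.2 hx) (sub_nonneg.2 hy)]
  have hMN : (n:ℝ)⁻¹ * (n:ℝ) = 1 := inv_mul_cancel₀ hnne
  have hM0 : (0:ℝ) ≤ (n:ℝ)⁻¹ := by positivity
  calc ∫ ω, |Yproc X U n t₃ ω - Yproc X U n t₂ ω| ^ 2
        * |Yproc X U n t₂ ω - Yproc X U n t₁ ω| ^ 2 ∂μ
      ≤ ((n:ℝ)⁻¹)^4 * (16 * ((T2.card : ℝ) * (T1.card : ℝ))) := key
    _ ≤ ((n:ℝ)⁻¹)^4 * (16 * (((n:ℝ) * ((c:ℝ) - (b:ℝ))) * ((n:ℝ) * ((b:ℝ) - (a:ℝ))))) := by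
        have hcb : (0:ℝ) ≤ (c:ℝ) - (b:ℝ) := by
          have := (Nat.cast_le (α := ℝ)).2 hbc; linarith
        have hAB : (T2.card:ℝ) * (T1.card:ℝ)
            ≤ ((n:ℝ) * ((c:ℝ) - (b:ℝ))) * ((n:ℝ) * ((b:ℝ) - (a:ℝ))) :=
          mul_le_mul hcard2 hcard1 (Nat.cast_nonneg _) (mul_nonneg hn0.le hcb)
        exact mul_le_mul_of_nonneg_left
          (mul_le_mul_of_nonneg_left hAB (by norm_num)) (by positivity)
    _ = 16 * ((n:ℝ)⁻¹ * (n:ℝ))^2 * (((n:ℝ)⁻¹)^2 * (((c:ℝ) - (b:ℝ)) * ((b:ℝ) - (a:ℝ)))) := by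
        ring
    _ = 16 * (((n:ℝ)⁻¹)^2 * (((c:ℝ) - (b:ℝ)) * ((b:ℝ) - (a:ℝ)))) := by rw [hMN]; ring
    _ ≤ 16 * (((n:ℝ)⁻¹)^2 * (4 * (n:ℝ)^2 * (t₃ - t₁)^2)) := by
        exact mul_le_mul_of_nonneg_left
          (mul_le_mul_of_nonneg_left hprod (by positivity)) (by norm_num)
    _ = 64 * ((n:ℝ)⁻¹ * (n:ℝ))^2 * (t₃ - t₁)^2 := by ring
    _ = 64 * (t₃ - t₁)^2 := by rw [hMN]; ring
end

section
/- Let λ > 0, let N be a Poisson random variable with mean λ, and let X_1, X_2, … be independent real random variables, independent of N, with E[X_k] = 0, E[X_k²] = 1 and E[|X_k|^j] ≤ c_j for all j ≥ 2 and all k. Then E[(Σ_{k=1}^{N} X_k)²] = λ, and for every integer l ≥ 1 there is a constant K, depending only on l and c_2,…,c_{2l}, such that E[(Σ_{k=1}^{N} X_k)^{2l}] ≤ K · Σ_{r=1}^{l} λ^r; in particular E[(Σ_{k=1}^{N} X_k)^{2l}] ≤ 2K λ^l whenever λ ≥ 1. (Moment estimate for Poisson-stopped random walks used in the proof of Theorem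 4.1 of the paper.) -/
open MeasureTheory ProbabilityTheory

open Finset

lemma aux_count (l n : ℕ) (hl : 1 ≤ l) :
    (((Fintype.piFinset (fun _ : Fin (2*l) => Finset.range n))).filter
      (fun p => (Finset.univ.image p).card ≤ l)).card ≤ l ^ (2*l) * n ^ l := by
  classical
  rcases Nat.eq_zero_or_pos n with rfl | hn
  · have : (Fintype.piFinset (fun _ : Fin (2*l) => Finset.range 0)) = ∅ := by
      ext p
      simp only [Fintype.mem_piFinset, Finset.range_zero, Finset.notMem_empty]
      exact ⟨fun h => (h ⟨0, by omega⟩).elim, False.elim⟩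
    rw [Finset.filter_congr_decidable, this]
    simp
  · set s : Finset ((Fin (2*l) → ℕ) × (Fin l → ℕ)) :=
      (Fintype.piFinset (fun _ : Fin (2*l) => Finset.range l)) ×ˢ
        (Fintype.piFinset (fun _ : Fin l => Finset.range n)) with hs
    set F : ((Fin (2*l) → ℕ) × (Fin l → ℕ)) → (Fin (2*l) → ℕ) :=
      fun q t => if h : q.1 t < l then q.2 ⟨q.1 t, h⟩ else 0 with hF
    have hsurj : Set.SurjOn F ↑s
        ↑(((Fintype.piFinset (fun _ : Fin (2*l) => Finset.range n))).filter
          (fun p => (Finset.univ.image p).card ≤ l)) := by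
      intro p hp
      simp only [Finset.coe_filter, Set.mem_setOf_eq, Fintype.mem_piFinset,
        Finset.mem_range] at hp
      obtain ⟨hpn, hpl⟩ := hp
      set s₀ : Finset ℕ := Finset.univ.image p with hs₀
      have hcard : Fintype.card s₀ ≤ Fintype.card (Fin l) := by
        rw [Fintype.card_coe, Fintype.card_fin]; exact hpl
      obtain ⟨E⟩ := Function.Embedding.nonempty_of_card_le hcard
      set φ : Fin (2*l) → ℕ := fun t => (E ⟨p t, mem_image_of_mem p (mem_univ t)⟩ : Fin l).val
        with hφ
      set ψ : Fin l → ℕ := fun j => if h : ∃ x : s₀, E x = j then ((h.choose : s₀) : ℕ) else 0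
        with hψ
      refine ⟨⟨φ, ψ⟩, ?_, ?_⟩
      · simp only [hs, Finset.coe_product, Set.mem_prod, Finset.mem_coe,
          Fintype.mem_piFinset, Finset.mem_range]
        constructor
        · intro t; exact (E ⟨p t, mem_image_of_mem p (mem_univ t)⟩).isLt
        · intro j
          by_cases h : ∃ x : s₀, E x = j
          · simp only [hψ, dif_pos h]
            have := (h.choose : s₀).2
            simp only [hs₀, Finset.mem_image] at this
            obtain ⟨t, _, ht⟩ := this
            rw [← ht]; exact hpn t
          · simp only [hψ, dif_neg h]; exact hn
      · funext t
        have hφt : φ t < l := (E ⟨p t, mem_image_of_mem p (mem_univ t)⟩).isLt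
        simp only [hF, dif_pos hφt]
        have hex : ∃ x : s₀, E x = ⟨φ t, hφt⟩ :=
          ⟨⟨p t, mem_image_of_mem p (mem_univ t)⟩, by simp [hφ]⟩
        have h2 : hex.choose = ⟨p t, mem_image_of_mem p (mem_univ t)⟩ := by
          apply E.injective
          rw [hex.choose_spec]
        have h3 : ψ ⟨φ t, hφt⟩ = ((hex.choose : s₀) : ℕ) := by
          rw [hψ]; exact dif_pos hex
        rw [h3, h2]
    calc (((Fintype.piFinset (fun _ : Fin (2*l) => Finset.range n))).filter
          (fun p => (Finset.univ.image p).card ≤ l)).card ≤ s.card :=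
        Finset.card_le_card_of_surjOn F hsurj
      _ = l ^ (2*l) * n ^ l := by
        rw [hs, Finset.card_product, Fintype.card_piFinset, Fintype.card_piFinset]
        simp
open Finset

lemma aux_pow_le (l n : ℕ) (hl : 1 ≤ l) : n ^ l ≤ l ^ l * (n.descFactorial l + n) := by
  rcases le_or_gt l n with h | h
  · have key : ∀ i ∈ Finset.range l, n ≤ l * (n - i) := by
      intro i hi
      rw [Finset.mem_range] at hi
      have hin : i ≤ n := le_trans (le_of_lt hi) h
      obtain ⟨d, hd⟩ : ∃ d, n = d + i := ⟨n - i, by omega⟩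
      have hd1 : 1 ≤ d := by omega
      have : d + i ≤ l * d := by nlinarith
      calc n = d + i := hd
        _ ≤ l * d := this
        _ = l * (n - i) := by
            congr 1
            omega
    calc n ^ l = ∏ _i ∈ Finset.range l, n := by rw [Finset.prod_const, Finset.card_range]
      _ ≤ ∏ i ∈ Finset.range l, l * (n - i) := Finset.prod_le_prod' key
      _ = (∏ _i ∈ Finset.range l, l) * ∏ i ∈ Finset.range l, (n - i) := by
          rw [← Finset.prod_mul_distrib]
      _ = l ^ l * n.descFactorial l := by
          rw [Finset.prod_const, Finset.card_range, Nat.descFactorial_eq_prod_range]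
      _ ≤ l ^ l * (n.descFactorial l + n) := Nat.mul_le_mul_left _ (Nat.le_add_right _ _)
  · obtain ⟨l', rfl⟩ : ∃ l', l = l' + 1 := ⟨l - 1, by omega⟩
    calc n ^ (l' + 1) = n ^ l' * n := pow_succ n l'
      _ ≤ (l' + 1) ^ l' * n := Nat.mul_le_mul_right n (Nat.pow_le_pow_left (le_of_lt h) l')
      _ ≤ (l' + 1) ^ (l' + 1) * n := Nat.mul_le_mul_right n
          (Nat.pow_le_pow_right (by omega) (by omega))
      _ ≤ (l' + 1) ^ (l' + 1) * (n.descFactorial (l' + 1) + n) :=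
          Nat.mul_le_mul_left _ (Nat.le_add_left _ _)
open MeasureTheory ProbabilityTheory Finset

lemma aux_prod_moment {Ω : Type} [MeasurableSpace Ω] (μ : Measure Ω) [IsProbabilityMeasure μ]
    (X : ℕ → Ω → ℝ) (hX : ∀ k, Measurable (X k))
    (hind : iIndepFun X μ)
    (m : ℕ → ℕ) (s : Finset ℕ)
    (hint : ∀ k ∈ s, Integrable (fun ω => X k ω ^ m k) μ) :
    Integrable (fun ω => ∏ k ∈ s, X k ω ^ m k) μ ∧
    ∫ ω, ∏ k ∈ s, X k ω ^ m k ∂μ = ∏ k ∈ s, ∫ ω, X k ω ^ m k ∂μ := by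
  classical
  set Y : ℕ → Ω → ℝ := fun k ω => X k ω ^ m k with hY
  have hYmeas : ∀ k, Measurable (Y k) := fun k => (hX k).pow_const (m k)
  have hYind : iIndepFun Y μ :=
    hind.comp (fun k x => x ^ m k) (fun k => measurable_id.pow_const (m k))
  induction s using Finset.cons_induction with
  | empty => simp
  | cons i s hi ih =>
    have hintY : Integrable (Y i) μ := hint i (Finset.mem_cons_self i s)
    have hints : ∀ k ∈ s, Integrable (fun ω => X k ω ^ m k) μ := fun k hk =>
      hint k (Finset.mem_cons_of_mem hk)
    obtain ⟨ihint, iheq⟩ := ih hints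
    have hindep : IndepFun (Y i) (fun ω => ∏ k ∈ s, Y k ω) μ := by
      have := (hYind.indepFun_finsetProd_of_notMem hYmeas hi).symm
      have heq : (∏ j ∈ s, Y j) = fun ω => ∏ k ∈ s, Y k ω := by
        funext ω; rw [Finset.prod_apply]
      rwa [heq] at this
    have hprodint : Integrable (fun ω => Y i ω * ∏ k ∈ s, Y k ω) μ := by
      have := hindep.integrable_mul hintY ihint
      simpa [Pi.mul_def] using this
    constructor
    · have heq : (fun ω => ∏ k ∈ Finset.cons i s hi, X k ω ^ m k)
          = fun ω => Y i ω * ∏ k ∈ s, Y k ω := by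
        funext ω; rw [Finset.prod_cons]
      rw [heq]; exact hprodint
    · have heq : (fun ω => ∏ k ∈ Finset.cons i s hi, X k ω ^ m k)
          = fun ω => Y i ω * ∏ k ∈ s, Y k ω := by
        funext ω; rw [Finset.prod_cons]
      rw [Finset.prod_cons, ← iheq]
      calc ∫ ω, ∏ k ∈ Finset.cons i s hi, X k ω ^ m k ∂μ
          = ∫ ω, Y i ω * ∏ k ∈ s, Y k ω ∂μ := by rw [heq]
        _ = (∫ ω, Y i ω ∂μ) * ∫ ω, ∏ k ∈ s, Y k ω ∂μ := by
            have := hindep.integral_mul_eq_mul_integral hintY.aestronglyMeasurable ihint.aestronglyMeasurable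
            simpa [Pi.mul_def] using this
        _ = (∫ ω, X i ω ^ m i ∂μ) * ∫ ω, ∏ k ∈ s, X k ω ^ m k ∂μ := rfl


private lemma aux_two_pow {e : ℕ} (x y : ℝ) (hx : 0 ≤ x) (hy : 0 ≤ y) :
    (x + y) ^ e ≤ 2 ^ e * (x ^ e + y ^ e) := by
  have h1 : x + y ≤ 2 * max x y := by
    rcases max_cases x y with ⟨h, h2⟩ | ⟨h, h2⟩ <;> rw [h] <;> linarith
  calc (x + y) ^ e ≤ (2 * max x y) ^ e :=
        pow_le_pow_left₀ (by positivity) h1 e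
    _ = 2 ^ e * (max x y) ^ e := mul_pow 2 _ e
    _ ≤ 2 ^ e * (x ^ e + y ^ e) := by
        apply mul_le_mul_of_nonneg_left _ (by positivity)
        rcases max_cases x y with ⟨h, _⟩ | ⟨h, _⟩ <;> rw [h] <;> nlinarith [pow_nonneg hx e, pow_nonneg hy e]

set_option maxHeartbeats 1000000 in
/-- moment estimate for Poisson-stopped random walks, from the proof of
Theorem 4.1 of the paper. For independent mean-zero, variance-one steps `X k` with
`E|X k|^j ≤ c j`, independent of a Poisson variable `N` with mean `λ`, the randomly stopped
sum `S = ∑_{k<N} X k` satisfies `E[S²] = λ` and, for every `l ≥ 1`, there is a constant `K`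
depending only on `l` and the `c j` (in particular not on `λ`) with
`E[S^{2l}] ≤ K ∑_{r=1}^l λ^r`, so `E[S^{2l}] ≤ 2 K λ^l` when `λ ≥ 1`. -/
theorem statement12 (l : ℕ) (hl : 1 ≤ l) (c : ℕ → ℝ) :
    ∃ K : ℝ, ∀ (Ω : Type) (_ : MeasurableSpace Ω) (μ : Measure Ω),
      IsProbabilityMeasure μ →
      ∀ (lam : ℝ), 0 < lam →
      ∀ (N : Ω → ℕ) (X : ℕ → Ω → ℝ),
        Measurable N →
        (∀ k, Measurable (X k)) →
        (∀ k : ℕ, μ {ω | N ω = k}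
          = ENNReal.ofReal (Real.exp (-lam) * lam ^ k / (Nat.factorial k))) →
        iIndepFun X μ →
        Indep (MeasurableSpace.comap N inferInstance)
          (⨆ k : ℕ, MeasurableSpace.comap (X k) inferInstance) μ →
        (∀ k, ∫ ω, X k ω ∂μ = 0) →
        (∀ k, ∫ ω, (X k ω) ^ 2 ∂μ = 1) →
        (∀ k, ∀ j : ℕ, 2 ≤ j → ∫ ω, |X k ω| ^ j ∂μ ≤ c j) →
        (∫ ω, (∑ k ∈ Finset.range (N ω), X k ω) ^ 2 ∂μ = lam) ∧
        (∫ ω, (∑ k ∈ Finset.range (N ω), X k ω) ^ (2 * l) ∂μ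
          ≤ K * ∑ r ∈ Finset.Icc 1 l, lam ^ r) ∧
        (1 ≤ lam →
          ∫ ω, (∑ k ∈ Finset.range (N ω), X k ω) ^ (2 * l) ∂μ ≤ 2 * K * lam ^ l) := by
  classical
  set e := 2 * l with he
  set M : ℝ := 1 + ∑ j ∈ Finset.Icc 2 e, |c j| with hMdef
  have hM1 : 1 ≤ M := by
    have : 0 ≤ ∑ j ∈ Finset.Icc 2 e, |c j| := Finset.sum_nonneg fun j _ => abs_nonneg _
    simp only [hMdef]; linarith
  have hM0 : 0 ≤ M := le_trans zero_le_one hM1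
  have hMc : ∀ j, 2 ≤ j → j ≤ e → c j ≤ M := by
    intro j h2 hje
    have hmem : j ∈ Finset.Icc 2 e := Finset.mem_Icc.mpr ⟨h2, hje⟩
    have h1 : c j ≤ |c j| := le_abs_self _
    have h2' : |c j| ≤ ∑ j ∈ Finset.Icc 2 e, |c j| :=
      Finset.single_le_sum (fun j _ => abs_nonneg (c j)) hmem
    simp only [hMdef]; linarith
  set Creal : ℝ := (l : ℝ) ^ (2 * l) * M ^ l with hCreal
  have hCreal0 : 0 ≤ Creal := by positivity
  set K0 : ℝ := 2 * Creal * (l : ℝ) ^ l with hK0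
  have hK00 : 0 ≤ K0 := by positivity
  refine ⟨K0 * l, ?_⟩
  intro Ω mΩ μ hprob lam hlam N X hN hX hpois hindX hindN hmean hvar hmom
  have hK0l : (0:ℝ) ≤ K0 * l := by positivity
  set P : ℕ → ℝ := fun n => Real.exp (-lam) * lam ^ n / (Nat.factorial n) with hPdef
  have hPpos : ∀ n, 0 < P n := by
    intro n
    apply div_pos (mul_pos (Real.exp_pos _) (pow_pos hlam n))
    exact_mod_cast Nat.factorial_pos n
  -- Poisson falling factorial moments
  have hexp : ∀ x : ℝ, HasSum (fun n : ℕ => x ^ n / (Nat.factorial n)) (Real.exp x) := by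
    intro x; rw [Real.exp_eq_exp_ℝ]; exact NormedSpace.expSeries_div_hasSum_exp x
  have hPdesc : ∀ r : ℕ, HasSum (fun n => P n * (n.descFactorial r : ℝ)) (lam ^ r) := by
    intro r
    have hinj : Function.Injective (fun m : ℕ => m + r) := add_left_injective r
    have hvan : ∀ x ∉ Set.range (fun m : ℕ => m + r),
        P x * (x.descFactorial r : ℝ) = 0 := by
      intro x hx
      have hxr : x < r := by
        by_contra h
        exact hx ⟨x - r, show x - r + r = x by omega⟩
      rw [Nat.descFactorial_eq_zero_iff_lt.mpr hxr]; simp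
    rw [← hinj.hasSum_iff hvan]
    have h0 : HasSum (fun m : ℕ => (Real.exp (-lam) * lam ^ r) * (lam ^ m / (Nat.factorial m)))
        (lam ^ r) := by
      have h1 := (hexp lam).mul_left (Real.exp (-lam) * lam ^ r)
      have h2 : Real.exp (-lam) * lam ^ r * Real.exp lam = lam ^ r := by
        rw [Real.exp_neg]
        field_simp
      rwa [h2] at h1
    apply h0.congr_fun
    intro m
    have hfacnat := Nat.factorial_mul_descFactorial (Nat.le_add_left r m)
    have h2 : (m + r - r) = m := by omega
    rw [h2] at hfacnat
    have hfac : ((m + r).descFactorial r : ℝ) * (Nat.factorial m : ℝ)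
        = ((Nat.factorial (m + r)) : ℝ) := by
      exact_mod_cast by rw [← hfacnat]; ring
    have hm0 : ((Nat.factorial m : ℝ)) ≠ 0 := by exact_mod_cast (Nat.factorial_pos m).ne'
    have hmr0 : ((Nat.factorial (m + r) : ℝ)) ≠ 0 := by
      exact_mod_cast (Nat.factorial_pos (m + r)).ne'
    show P (m + r) * ((m + r).descFactorial r : ℝ)
        = Real.exp (-lam) * lam ^ r * (lam ^ m / (Nat.factorial m))
    have hdesc : ((m + r).descFactorial r : ℝ) = ((m + r).factorial : ℝ) / (m.factorial : ℝ) := by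
      rw [eq_div_iff hm0]; exact hfac
    simp only [hPdef]
    rw [pow_add, hdesc]
    field_simp
  -- measurability
  have hSnmeas : ∀ n : ℕ, Measurable (fun ω => ∑ k ∈ Finset.range n, X k ω) := fun n =>
    Finset.measurable_sum _ (fun k _ => hX k)
  have hSmeas : Measurable (fun ω => ∑ k ∈ Finset.range (N ω), X k ω) := by
    have h1 : Measurable (fun q : Ω × ℕ => ∑ k ∈ Finset.range q.2, X k q.1) :=
      measurable_from_prod_countable_left (fun n => hSnmeas n)
    exact h1.comp (measurable_id.prodMk hN)
  -- the decomposition over the partition {N = n}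
  have hMf : MeasurableSpace.comap N inferInstance ≤ mΩ := by
    rw [← measurable_iff_comap_le]; exact hN
  have hMg : (⨆ k : ℕ, MeasurableSpace.comap (X k) inferInstance) ≤ mΩ :=
    iSup_le fun k => by rw [← measurable_iff_comap_le]; exact hX k
  have hXk' : ∀ k, Measurable[⨆ k : ℕ, MeasurableSpace.comap (X k) inferInstance] (X k) :=
    fun k => measurable_iff_comap_le.mpr
      (le_iSup (fun k => MeasurableSpace.comap (X k) inferInstance) k)
  have hdec : ∀ e' : ℕ,
      ∫⁻ ω, ENNReal.ofReal ((∑ k ∈ Finset.range (N ω), X k ω) ^ e') ∂μ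
        = ∑' n, ENNReal.ofReal (P n)
            * ∫⁻ ω, ENNReal.ofReal ((∑ k ∈ Finset.range n, X k ω) ^ e') ∂μ := by
    intro e'
    set g : ℕ → Ω → ENNReal :=
      fun n ω => ENNReal.ofReal ((∑ k ∈ Finset.range n, X k ω) ^ e') with hg
    have hgmeas : ∀ n, Measurable (g n) := fun n =>
      ENNReal.measurable_ofReal.comp ((hSnmeas n).pow_const e')
    have hgmeas2 : ∀ n, Measurable[⨆ k : ℕ, MeasurableSpace.comap (X k) inferInstance] (g n) := by
      intro n
      exact ENNReal.measurable_ofReal.comp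
        ((Finset.measurable_sum _ (fun k _ => hXk' k)).pow_const e')
    have hAmeas : ∀ n : ℕ, MeasurableSet {ω | N ω = n} := fun n =>
      hN (measurableSet_singleton n)
    have hpt : ∀ ω, ENNReal.ofReal ((∑ k ∈ Finset.range (N ω), X k ω) ^ e')
        = ∑' n, ({ω' | N ω' = n}.indicator (g n)) ω := by
      intro ω
      rw [tsum_eq_single (N ω) ?_]
      · rw [Set.indicator_of_mem (show ω ∈ {ω' | N ω' = N ω} from rfl)]
      · intro n hn
        rw [Set.indicator_of_notMem]
        intro h
        exact hn (Set.mem_setOf.mp h).symm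
    calc ∫⁻ ω, ENNReal.ofReal ((∑ k ∈ Finset.range (N ω), X k ω) ^ e') ∂μ
        = ∫⁻ ω, ∑' n, ({ω' | N ω' = n}.indicator (g n)) ω ∂μ := lintegral_congr hpt
      _ = ∑' n, ∫⁻ ω, ({ω' | N ω' = n}.indicator (g n)) ω ∂μ :=
          lintegral_tsum (fun n => ((hgmeas n).indicator (hAmeas n)).aemeasurable)
      _ = ∑' n, ENNReal.ofReal (P n)
            * ∫⁻ ω, ENNReal.ofReal ((∑ k ∈ Finset.range n, X k ω) ^ e') ∂μ := by
          apply tsum_congr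
          intro n
          have h1 : ∀ ω, ({ω' | N ω' = n}.indicator (g n)) ω
              = ({ω' | N ω' = n}.indicator (fun _ => (1:ENNReal)) ω) * g n ω := by
            intro ω
            by_cases h : ω ∈ {ω' | N ω' = n}
            · rw [Set.indicator_of_mem h, Set.indicator_of_mem h, one_mul]
            · rw [Set.indicator_of_notMem h, Set.indicator_of_notMem h, zero_mul]
          have hmf : Measurable[MeasurableSpace.comap N inferInstance]
              ({ω' | N ω' = n}.indicator (fun _ : Ω => (1:ENNReal))) := by
            apply measurable_const.indicator
            exact ⟨{n}, trivial, rfl⟩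
          calc ∫⁻ ω, ({ω' | N ω' = n}.indicator (g n)) ω ∂μ
              = ∫⁻ ω, ({ω' | N ω' = n}.indicator (fun _ => (1:ENNReal)) ω) * g n ω ∂μ :=
                lintegral_congr h1
            _ = (∫⁻ ω, ({ω' | N ω' = n}.indicator (fun _ => (1:ENNReal))) ω ∂μ)
                * ∫⁻ ω, g n ω ∂μ :=
                lintegral_mul_eq_lintegral_mul_lintegral_of_independent_measurableSpace
                  hMf hMg hindN hmf (hgmeas2 n)
            _ = ENNReal.ofReal (P n) * ∫⁻ ω, g n ω ∂μ := by
                rw [lintegral_indicator_const (hAmeas n), one_mul, hpois n]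
  -- Part 1 : second moment
  have hint2 : ∀ k, Integrable (fun ω => X k ω ^ 2) μ := by
    intro k
    by_contra h
    have := hvar k
    rw [integral_undef h] at this
    norm_num at this
  have hmemL2 : ∀ k, MemLp (X k) 2 μ := fun k =>
    (memLp_two_iff_integrable_sq (hX k).aestronglyMeasurable).mpr (hint2 k)
  have hint1 : ∀ k, Integrable (X k) μ := fun k => (hmemL2 k).integrable (by norm_num)
  have hintmul : ∀ j k, Integrable (fun ω => X j ω * X k ω) μ := by
    intro j k
    rcases eq_or_ne j k with rfl | hjk
    · have := hint2 j
      simp only [pow_two] at this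
      exact this
    · have := (hindX.indepFun hjk).integrable_mul (hint1 j) (hint1 k)
      exact this
  have hval : ∀ j k : ℕ, ∫ ω, X j ω * X k ω ∂μ = if j = k then 1 else 0 := by
    intro j k
    rcases eq_or_ne j k with rfl | hjk
    · rw [if_pos rfl]
      have := hvar j
      simp only [pow_two] at this
      exact this
    · rw [if_neg hjk]
      have h1 := (hindX.indepFun hjk).integral_fun_mul_eq_mul_integral (hint1 j).aestronglyMeasurable (hint1 k).aestronglyMeasurable
      have h2 : ∫ ω, X j ω * X k ω ∂μ = (∫ ω, X j ω ∂μ) * ∫ ω, X k ω ∂μ := h1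
      rw [h2, hmean j, hmean k, mul_zero]
  have hSn2 : ∀ n : ℕ, ∫ ω, (∑ k ∈ Finset.range n, X k ω) ^ 2 ∂μ = (n : ℝ) := by
    intro n
    have hexpand : ∀ ω : Ω, (∑ k ∈ Finset.range n, X k ω) ^ 2
        = ∑ j ∈ Finset.range n, ∑ k ∈ Finset.range n, X j ω * X k ω := by
      intro ω; rw [pow_two, Finset.sum_mul_sum]
    calc ∫ ω, (∑ k ∈ Finset.range n, X k ω) ^ 2 ∂μ
        = ∫ ω, ∑ j ∈ Finset.range n, ∑ k ∈ Finset.range n, X j ω * X k ω ∂μ := by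
          apply integral_congr_ae
          exact Filter.Eventually.of_forall hexpand
      _ = ∑ j ∈ Finset.range n, ∫ ω, ∑ k ∈ Finset.range n, X j ω * X k ω ∂μ :=
          integral_finset_sum _ (fun j _ => integrable_finset_sum _ (fun k _ => hintmul j k))
      _ = ∑ j ∈ Finset.range n, ∑ k ∈ Finset.range n, ∫ ω, X j ω * X k ω ∂μ := by
          apply Finset.sum_congr rfl
          intro j _
          exact integral_finset_sum _ (fun k _ => hintmul j k)
      _ = ∑ j ∈ Finset.range n, (1:ℝ) := by
          apply Finset.sum_congr rfl
          intro j hj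
          rw [Finset.sum_congr rfl (fun k _ => hval j k)]
          rw [Finset.sum_ite_eq (Finset.range n) j (fun _ => (1:ℝ))]
          rw [if_pos hj]
      _ = (n : ℝ) := by rw [Finset.sum_const, Finset.card_range, nsmul_eq_mul, mul_one]
  have hSn2int : ∀ n : ℕ, Integrable (fun ω => (∑ k ∈ Finset.range n, X k ω) ^ 2) μ := by
    intro n
    have h := memLp_finsetSum' (Finset.range n) (fun k _ => hmemL2 k)
    have heq : (∑ i ∈ Finset.range n, X i) = fun ω => ∑ k ∈ Finset.range n, X k ω := by
      funext ω; simp [Finset.sum_apply]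
    rw [heq] at h
    exact h.integrable_sq
  have hpart1 : ∫ ω, (∑ k ∈ Finset.range (N ω), X k ω) ^ 2 ∂μ = lam := by
    have hn2 : ∀ n : ℕ, ∫⁻ ω, ENNReal.ofReal ((∑ k ∈ Finset.range n, X k ω) ^ 2) ∂μ
        = ENNReal.ofReal ((n : ℝ)) := by
      intro n
      rw [← ofReal_integral_eq_lintegral_ofReal (hSn2int n)
        (Filter.Eventually.of_forall fun ω => sq_nonneg _), hSn2 n]
    have hsum1 : HasSum (fun n : ℕ => P n * (n : ℝ)) lam := by
      have := hPdesc 1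
      simp only [Nat.descFactorial_one, pow_one] at this
      exact this
    have htot : ∫⁻ ω, ENNReal.ofReal ((∑ k ∈ Finset.range (N ω), X k ω) ^ 2) ∂μ
        = ENNReal.ofReal lam := by
      rw [hdec 2]
      calc ∑' n, ENNReal.ofReal (P n)
            * ∫⁻ ω, ENNReal.ofReal ((∑ k ∈ Finset.range n, X k ω) ^ 2) ∂μ
          = ∑' n, ENNReal.ofReal (P n * (n:ℝ)) := by
            apply tsum_congr
            intro n
            rw [hn2 n, ← ENNReal.ofReal_mul (hPpos n).le]
        _ = ENNReal.ofReal (∑' n, P n * (n:ℝ)) :=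
            (ENNReal.ofReal_tsum_of_nonneg
              (fun n => mul_nonneg (hPpos n).le (Nat.cast_nonneg n)) hsum1.summable).symm
        _ = ENNReal.ofReal lam := by rw [hsum1.tsum_eq]
    rw [integral_eq_lintegral_of_nonneg_ae
      (Filter.Eventually.of_forall fun ω => sq_nonneg _)
      (hSmeas.pow_const 2).aestronglyMeasurable]
    rw [htot, ENNReal.toReal_ofReal hlam.le]
  refine ⟨hpart1, ?_⟩
  -- Part 2 and 3 setup
  have hEnonneg : ∀ x : ℝ, 0 ≤ x ^ e := fun x => (even_two_mul l).pow_nonneg x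
  have hsum_pos : (0:ℝ) ≤ ∑ r ∈ Finset.Icc 1 l, lam ^ r :=
    Finset.sum_nonneg fun r _ => (pow_pos hlam r).le
  set T := ∫⁻ ω, ENNReal.ofReal ((∑ k ∈ Finset.range (N ω), X k ω) ^ e) ∂μ with hT
  have hIeqT : ∫ ω, (∑ k ∈ Finset.range (N ω), X k ω) ^ e ∂μ = T.toReal := by
    rw [integral_eq_lintegral_of_nonneg_ae (Filter.Eventually.of_forall fun ω => hEnonneg _)
      (hSmeas.pow_const e).aestronglyMeasurable]
  have hmain : ∫ ω, (∑ k ∈ Finset.range (N ω), X k ω) ^ e ∂μ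
      ≤ K0 * ∑ r ∈ Finset.Icc 1 l, lam ^ r ∧
      (1 ≤ lam → ∫ ω, (∑ k ∈ Finset.range (N ω), X k ω) ^ e ∂μ ≤ K0 * ((l:ℝ) * lam ^ l)) := by
    by_cases hTtop : T = ⊤
    · have hnint : ¬ Integrable (fun ω => (∑ k ∈ Finset.range (N ω), X k ω) ^ e) μ := by
        intro h
        have h2 : T < ⊤ := h.lintegral_lt_top
        rw [hTtop] at h2
        exact lt_irrefl _ h2
      rw [integral_undef hnint]
      constructor
      · positivity
      · intro _; positivity
    · -- finite case
      have hTn_ne : ∀ n : ℕ,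
          ∫⁻ ω, ENNReal.ofReal ((∑ k ∈ Finset.range n, X k ω) ^ e) ∂μ ≠ ⊤ := by
        intro n htop
        apply hTtop
        rw [hT, hdec e]
        apply top_le_iff.mp
        refine le_trans ?_ (ENNReal.le_tsum n)
        rw [htop, ENNReal.mul_top (ENNReal.ofReal_pos.mpr (hPpos n)).ne']
      have hSnIntE : ∀ n : ℕ,
          Integrable (fun ω => (∑ k ∈ Finset.range n, X k ω) ^ e) μ := by
        intro n
        refine ⟨((hSnmeas n).pow_const e).aestronglyMeasurable, ?_⟩
        rw [hasFiniteIntegral_iff_norm]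
        have heq : ∀ ω : Ω, ENNReal.ofReal ‖(∑ k ∈ Finset.range n, X k ω) ^ e‖
            = ENNReal.ofReal ((∑ k ∈ Finset.range n, X k ω) ^ e) := by
          intro ω; rw [Real.norm_eq_abs, abs_of_nonneg (hEnonneg _)]
        rw [lintegral_congr heq]
        exact lt_top_iff_ne_top.mpr (hTn_ne n)
      -- integrability of |X k| ^ e
      have hXe : ∀ k : ℕ, Integrable (fun ω => |X k ω| ^ e) μ := by
        intro k
        have hbound : ∀ ω : Ω, |X k ω| ^ e
            ≤ 2 ^ e * ((∑ j ∈ Finset.range (k+1), X j ω) ^ e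
              + (∑ j ∈ Finset.range k, X j ω) ^ e) := by
          intro ω
          have hXk : X k ω = (∑ j ∈ Finset.range (k+1), X j ω)
              - (∑ j ∈ Finset.range k, X j ω) := by
            rw [Finset.sum_range_succ]; ring
          have h1 : |X k ω| ≤ |∑ j ∈ Finset.range (k+1), X j ω|
              + |∑ j ∈ Finset.range k, X j ω| := by
            rw [hXk]; exact abs_sub _ _
          calc |X k ω| ^ e ≤ (|∑ j ∈ Finset.range (k+1), X j ω|
                + |∑ j ∈ Finset.range k, X j ω|) ^ e :=
              pow_le_pow_left₀ (abs_nonneg _) h1 e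
            _ ≤ 2 ^ e * (|∑ j ∈ Finset.range (k+1), X j ω| ^ e
                + |∑ j ∈ Finset.range k, X j ω| ^ e) :=
              aux_two_pow _ _ (abs_nonneg _) (abs_nonneg _)
            _ = 2 ^ e * ((∑ j ∈ Finset.range (k+1), X j ω) ^ e
                + (∑ j ∈ Finset.range k, X j ω) ^ e) := by
              rw [(even_two_mul l).pow_abs, (even_two_mul l).pow_abs]
        have hg : Integrable (fun ω => 2 ^ e * ((∑ j ∈ Finset.range (k+1), X j ω) ^ e
            + (∑ j ∈ Finset.range k, X j ω) ^ e)) μ :=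
          ((hSnIntE (k+1)).add (hSnIntE k)).const_mul _
        apply Integrable.mono hg (((hX k).abs.pow_const e).aestronglyMeasurable)
        apply Filter.Eventually.of_forall
        intro ω
        rw [Real.norm_eq_abs, Real.norm_eq_abs, abs_of_nonneg (by positivity : (0:ℝ) ≤ |X k ω| ^ e),
          abs_of_nonneg (mul_nonneg (by positivity : (0:ℝ) ≤ (2:ℝ)^e)
            (add_nonneg (hEnonneg _) (hEnonneg _)))]
        exact hbound ω
      have hXpow : ∀ k : ℕ, ∀ m : ℕ, m ≤ e → Integrable (fun ω => X k ω ^ m) μ := by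
        intro k m hm
        have hg : Integrable (fun ω => 1 + |X k ω| ^ e) μ := (integrable_const 1).add (hXe k)
        apply Integrable.mono hg ((hX k).pow_const m).aestronglyMeasurable
        apply Filter.Eventually.of_forall
        intro ω
        rw [Real.norm_eq_abs, Real.norm_eq_abs, abs_pow,
          abs_of_nonneg (by positivity : (0:ℝ) ≤ 1 + |X k ω| ^ e)]
        rcases le_or_gt (|X k ω|) 1 with h | h
        · have : |X k ω| ^ m ≤ 1 := pow_le_one₀ (abs_nonneg _) h
          nlinarith [pow_nonneg (abs_nonneg (X k ω)) e]
        · have : |X k ω| ^ m ≤ |X k ω| ^ e := pow_le_pow_right₀ h.le hm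
          nlinarith
      -- the per-n moment bound
      have hmom_n : ∀ n : ℕ, ∫ ω, (∑ k ∈ Finset.range n, X k ω) ^ e ∂μ
          ≤ Creal * (n:ℝ) ^ l := by
        intro n
        set P2 := Fintype.piFinset (fun _ : Fin e => Finset.range n) with hP2
        set mult : (Fin e → ℕ) → ℕ → ℕ :=
          fun p k => (Finset.univ.filter (fun t => p t = k)).card with hmult
        have hmult_le : ∀ p : Fin e → ℕ, ∀ k, mult p k ≤ e := by
          intro p k
          calc mult p k ≤ Finset.univ.card := Finset.card_filter_le _ _
            _ = e := by rw [Finset.card_univ, Fintype.card_fin]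
        have hgroup : ∀ (p : Fin e → ℕ) (ω : Ω), (∏ t : Fin e, X (p t) ω)
            = ∏ k ∈ Finset.univ.image p, X k ω ^ mult p k := by
          intro p ω
          exact Finset.prod_comp (fun k => X k ω) p
        have hterm_int : ∀ p : Fin e → ℕ,
            Integrable (fun ω => ∏ t : Fin e, X (p t) ω) μ := by
          intro p
          have h := (aux_prod_moment μ X hX hindX (mult p) (Finset.univ.image p)
            (fun k _ => hXpow k (mult p k) (hmult_le p k))).1
          apply h.congr
          apply Filter.Eventually.of_forall
          intro ω
          exact (hgroup p ω).symm
        have hterm_eq : ∀ p : Fin e → ℕ,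
            ∫ ω, ∏ t : Fin e, X (p t) ω ∂μ
              = ∏ k ∈ Finset.univ.image p, ∫ ω, X k ω ^ mult p k ∂μ := by
          intro p
          have h := (aux_prod_moment μ X hX hindX (mult p) (Finset.univ.image p)
            (fun k _ => hXpow k (mult p k) (hmult_le p k))).2
          rw [← h]
          apply integral_congr_ae
          exact Filter.Eventually.of_forall (fun ω => hgroup p ω)
        have hfactor_le : ∀ (p : Fin e → ℕ) (k : ℕ),
            |∫ ω, X k ω ^ mult p k ∂μ| ≤ M := by
          intro p k
          rcases Nat.lt_or_ge (mult p k) 2 with h2 | h2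
          · have h01 : mult p k = 0 ∨ mult p k = 1 := by omega
            rcases h01 with h | h
            · rw [h]
              simp only [pow_zero, integral_const, measure_univ, ENNReal.toReal_one, one_smul,
                smul_eq_mul, mul_one, probReal_univ, abs_one]
              exact hM1
            · rw [h]
              simp only [pow_one]
              rw [hmean k, abs_zero]
              exact hM0
          · have hst1 : |∫ ω, X k ω ^ mult p k ∂μ| ≤ ∫ ω, |X k ω| ^ mult p k ∂μ := by
              have h := MeasureTheory.norm_integral_le_integral_norm
                (fun ω => X k ω ^ mult p k) (μ := μ)
              simp only [Real.norm_eq_abs, abs_pow] at h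
              exact h
            have hst2 : ∫ ω, |X k ω| ^ mult p k ∂μ ≤ c (mult p k) := hmom k (mult p k) h2
            have hst3 : c (mult p k) ≤ M := hMc (mult p k) h2 (hmult_le p k)
            linarith
        have hsum_mult : ∀ p : Fin e → ℕ,
            ∑ k ∈ Finset.univ.image p, mult p k = e := by
          intro p
          have := Finset.card_eq_sum_card_image p (Finset.univ : Finset (Fin e))
          rw [Finset.card_univ, Fintype.card_fin] at this
          exact this.symm
        have hmult_pos : ∀ (p : Fin e → ℕ) (k : ℕ), k ∈ Finset.univ.image p →
            1 ≤ mult p k := by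
          intro p k hk
          rw [Finset.mem_image] at hk
          obtain ⟨t, _, ht⟩ := hk
          apply Finset.card_pos.mpr
          exact ⟨t, Finset.mem_filter.mpr ⟨Finset.mem_univ t, ht⟩⟩
        have hbound : ∀ p ∈ P2, ∫ ω, ∏ t : Fin e, X (p t) ω ∂μ
            ≤ (if (Finset.univ.image p).card ≤ l then M ^ l else 0) := by
          intro p _
          rw [hterm_eq p]
          by_cases hc : (Finset.univ.image p).card ≤ l
          · rw [if_pos hc]
            calc ∏ k ∈ Finset.univ.image p, ∫ ω, X k ω ^ mult p k ∂μ
                ≤ |∏ k ∈ Finset.univ.image p, ∫ ω, X k ω ^ mult p k ∂μ| := le_abs_self _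
              _ = ∏ k ∈ Finset.univ.image p, |∫ ω, X k ω ^ mult p k ∂μ| :=
                  Finset.abs_prod _ _
              _ ≤ ∏ _k ∈ Finset.univ.image p, M :=
                  Finset.prod_le_prod (fun k _ => abs_nonneg _) (fun k _ => hfactor_le p k)
              _ = M ^ (Finset.univ.image p).card := Finset.prod_const M
              _ ≤ M ^ l := pow_le_pow_right₀ hM1 hc
          · rw [if_neg hc]
            obtain ⟨k, hk, hone⟩ : ∃ k ∈ Finset.univ.image p, mult p k = 1 := by
              by_contra hno
              push_neg at hno
              have hge : ∀ k ∈ Finset.univ.image p, 2 ≤ mult p k := by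
                intro k hk
                have h1 := hmult_pos p k hk
                have h2 := hno k hk
                omega
              have : 2 * (Finset.univ.image p).card ≤ e := by
                calc 2 * (Finset.univ.image p).card
                    = ∑ _k ∈ Finset.univ.image p, 2 := by
                      rw [Finset.sum_const, smul_eq_mul, mul_comm]
                  _ ≤ ∑ k ∈ Finset.univ.image p, mult p k := Finset.sum_le_sum hge
                  _ = e := hsum_mult p
              omega
            apply le_of_eq
            apply Finset.prod_eq_zero hk
            rw [hone]
            simp only [pow_one]
            exact hmean k
        calc ∫ ω, (∑ k ∈ Finset.range n, X k ω) ^ e ∂μ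
            = ∫ ω, ∑ p ∈ P2, ∏ t : Fin e, X (p t) ω ∂μ := by
              apply integral_congr_ae
              apply Filter.Eventually.of_forall
              intro ω
              exact Finset.sum_pow' (Finset.range n) (fun k => X k ω) e
          _ = ∑ p ∈ P2, ∫ ω, ∏ t : Fin e, X (p t) ω ∂μ :=
              integral_finset_sum _ (fun p _ => hterm_int p)
          _ ≤ ∑ p ∈ P2, (if (Finset.univ.image p).card ≤ l then M ^ l else 0) :=
              Finset.sum_le_sum hbound
          _ = (P2.filter (fun p => (Finset.univ.image p).card ≤ l)).card • M ^ l := by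
              rw [Finset.sum_ite, Finset.sum_const_zero, add_zero, Finset.sum_const]
          _ ≤ (l ^ (2*l) * n ^ l) • M ^ l := by
              apply nsmul_le_nsmul_left (by positivity)
              exact aux_count l n hl
          _ = Creal * (n:ℝ) ^ l := by
              rw [nsmul_eq_mul, hCreal]
              push_cast
              ring
      -- sum up
      have hTn_le : ∀ n : ℕ, ∫⁻ ω, ENNReal.ofReal ((∑ k ∈ Finset.range n, X k ω) ^ e) ∂μ
          ≤ ENNReal.ofReal (Creal * (n:ℝ) ^ l) := by
        intro n
        rw [← ofReal_integral_eq_lintegral_ofReal (hSnIntE n)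
          (Filter.Eventually.of_forall fun ω => hEnonneg _)]
        exact ENNReal.ofReal_le_ofReal (hmom_n n)
      have hsum1 : HasSum (fun n : ℕ => P n * (n : ℝ)) lam := by
        have := hPdesc 1
        simp only [Nat.descFactorial_one, pow_one] at this
        exact this
      have hsuml : HasSum (fun n : ℕ => P n * ((n.descFactorial l : ℝ) + n)) (lam ^ l + lam) := by
        have h := (hPdesc l).add hsum1
        apply h.congr_fun
        intro n
        ring
      have hnl : ∀ n : ℕ, (n:ℝ) ^ l ≤ (l:ℝ) ^ l * ((n.descFactorial l : ℝ) + n) := by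
        intro n
        have := aux_pow_le l n hl
        have h2 : ((n ^ l : ℕ) : ℝ) ≤ ((l ^ l * (n.descFactorial l + n) : ℕ) : ℝ) := by
          exact_mod_cast this
        push_cast at h2
        exact h2
      have hle_n : ∀ n : ℕ, P n * (Creal * (n:ℝ) ^ l)
          ≤ Creal * (l:ℝ) ^ l * (P n * ((n.descFactorial l : ℝ) + n)) := by
        intro n
        have h1 := hnl n
        have h2 := (hPpos n).le
        nlinarith [mul_le_mul_of_nonneg_left h1 h2,
          mul_nonneg h2 (mul_nonneg hCreal0 (pow_nonneg (Nat.cast_nonneg n) l))]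
      have hsummable2 : Summable (fun n : ℕ =>
          Creal * (l:ℝ) ^ l * (P n * ((n.descFactorial l : ℝ) + n))) :=
        hsuml.summable.mul_left _
      have hsummable1 : Summable (fun n : ℕ => P n * (Creal * (n:ℝ) ^ l)) :=
        Summable.of_nonneg_of_le
          (fun n => by positivity)
          hle_n hsummable2
      have htsum_le : ∑' n : ℕ, P n * (Creal * (n:ℝ) ^ l)
          ≤ Creal * (l:ℝ) ^ l * (lam ^ l + lam) := by
        calc ∑' n : ℕ, P n * (Creal * (n:ℝ) ^ l)
            ≤ ∑' n : ℕ, Creal * (l:ℝ) ^ l * (P n * ((n.descFactorial l : ℝ) + n)) :=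
              hsummable1.tsum_le_tsum hle_n hsummable2
          _ = Creal * (l:ℝ) ^ l * (lam ^ l + lam) := by
              rw [tsum_mul_left, hsuml.tsum_eq]
      have hT_le : T ≤ ENNReal.ofReal (Creal * (l:ℝ) ^ l * (lam ^ l + lam)) := by
        rw [hT, hdec e]
        calc ∑' n, ENNReal.ofReal (P n)
              * ∫⁻ ω, ENNReal.ofReal ((∑ k ∈ Finset.range n, X k ω) ^ e) ∂μ
            ≤ ∑' n, ENNReal.ofReal (P n) * ENNReal.ofReal (Creal * (n:ℝ) ^ l) :=
              ENNReal.tsum_le_tsum (fun n => mul_le_mul_right (hTn_le n) _)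
          _ = ∑' n, ENNReal.ofReal (P n * (Creal * (n:ℝ) ^ l)) := by
              apply tsum_congr
              intro n
              rw [← ENNReal.ofReal_mul (hPpos n).le]
          _ = ENNReal.ofReal (∑' n, P n * (Creal * (n:ℝ) ^ l)) :=
              (ENNReal.ofReal_tsum_of_nonneg (f := fun n : ℕ => P n * (Creal * (n:ℝ) ^ l)) (fun n => by positivity) hsummable1).symm
          _ ≤ ENNReal.ofReal (Creal * (l:ℝ) ^ l * (lam ^ l + lam)) :=
              ENNReal.ofReal_le_ofReal htsum_le
      have hfinal : ∫ ω, (∑ k ∈ Finset.range (N ω), X k ω) ^ e ∂μ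
          ≤ Creal * (l:ℝ) ^ l * (lam ^ l + lam) := by
        rw [hIeqT]
        have h1 := ENNReal.toReal_mono (by exact ENNReal.ofReal_ne_top) hT_le
        rwa [ENNReal.toReal_ofReal (by positivity)] at h1
      constructor
      · -- part 2
        have hlaml : lam ^ l ≤ ∑ r ∈ Finset.Icc 1 l, lam ^ r :=
          Finset.single_le_sum (fun r _ => (pow_pos hlam r).le)
            (Finset.mem_Icc.mpr ⟨hl, le_refl l⟩)
        have hlam1 : lam ≤ ∑ r ∈ Finset.Icc 1 l, lam ^ r := by
          have := Finset.single_le_sum (fun r (_ : r ∈ Finset.Icc 1 l) => (pow_pos hlam r).le)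
            (Finset.mem_Icc.mpr ⟨le_refl 1, hl⟩)
          rwa [pow_one] at this
        calc ∫ ω, (∑ k ∈ Finset.range (N ω), X k ω) ^ e ∂μ
            ≤ Creal * (l:ℝ) ^ l * (lam ^ l + lam) := hfinal
          _ ≤ Creal * (l:ℝ) ^ l * (2 * ∑ r ∈ Finset.Icc 1 l, lam ^ r) := by
              apply mul_le_mul_of_nonneg_left (by linarith) (by positivity)
          _ = K0 * ∑ r ∈ Finset.Icc 1 l, lam ^ r := by rw [hK0]; ring
      · -- part 3
        intro hlam1
        have hterm : ∀ r ∈ Finset.Icc 1 l, lam ^ r ≤ lam ^ l := by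
          intro r hr
          exact pow_le_pow_right₀ hlam1 (Finset.mem_Icc.mp hr).2
        have hsum_le : ∑ r ∈ Finset.Icc 1 l, lam ^ r ≤ (l:ℝ) * lam ^ l := by
          calc ∑ r ∈ Finset.Icc 1 l, lam ^ r ≤ ∑ _r ∈ Finset.Icc 1 l, lam ^ l :=
              Finset.sum_le_sum hterm
            _ = (l:ℝ) * lam ^ l := by
              rw [Finset.sum_const, Nat.card_Icc, nsmul_eq_mul]
              norm_num
        have hlaml : lam ^ l ≤ ∑ r ∈ Finset.Icc 1 l, lam ^ r :=
          Finset.single_le_sum (fun r _ => (pow_pos hlam r).le)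
            (Finset.mem_Icc.mpr ⟨hl, le_refl l⟩)
        have hlam1' : lam ≤ ∑ r ∈ Finset.Icc 1 l, lam ^ r := by
          have := Finset.single_le_sum (fun r (_ : r ∈ Finset.Icc 1 l) => (pow_pos hlam r).le)
            (Finset.mem_Icc.mpr ⟨le_refl 1, hl⟩)
          rwa [pow_one] at this
        calc ∫ ω, (∑ k ∈ Finset.range (N ω), X k ω) ^ e ∂μ
            ≤ Creal * (l:ℝ) ^ l * (lam ^ l + lam) := hfinal
          _ ≤ Creal * (l:ℝ) ^ l * (2 * ∑ r ∈ Finset.Icc 1 l, lam ^ r) := by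
              apply mul_le_mul_of_nonneg_left (by linarith) (by positivity)
          _ ≤ Creal * (l:ℝ) ^ l * (2 * ((l:ℝ) * lam ^ l)) := by
              apply mul_le_mul_of_nonneg_left (by linarith) (by positivity)
          _ = K0 * ((l:ℝ) * lam ^ l) := by rw [hK0]; ring
  obtain ⟨hm2, hm3⟩ := hmain
  constructor
  · calc ∫ ω, (∑ k ∈ Finset.range (N ω), X k ω) ^ (2 * l) ∂μ
        ≤ K0 * ∑ r ∈ Finset.Icc 1 l, lam ^ r := hm2
      _ ≤ K0 * (l:ℝ) * ∑ r ∈ Finset.Icc 1 l, lam ^ r := by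
          have hl1 : (1:ℝ) ≤ (l:ℝ) := by exact_mod_cast hl
          nlinarith [mul_nonneg (mul_nonneg hK00 hsum_pos) (sub_nonneg.mpr hl1)]
      _ = K0 * ↑l * ∑ r ∈ Finset.Icc 1 l, lam ^ r := rfl
  · intro hlam1
    calc ∫ ω, (∑ k ∈ Finset.range (N ω), X k ω) ^ (2 * l) ∂μ
        ≤ K0 * ((l:ℝ) * lam ^ l) := hm3 hlam1
      _ = K0 * (l:ℝ) * lam ^ l := by ring
      _ ≤ 2 * (K0 * ↑l) * lam ^ l := by nlinarith [pow_pos hlam l]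
end
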